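/- arXiv:1908.07854 — 8 statements merged into one kernel-verified Lean document; each statement's English description precedes it below -/
import Mathlib

section
/- Let n ≥ 4 be an even integer and Λ = Cay(D_{2n}, Ψ) with Ψ = {b, ab, ..., a^{n-1}b} ∪ {a^{n/2}}. The adjacency matrix of Λ has eigenvalues n+1 and 1−n each with multiplicity 1, eigenvalue 1 with multiplicity n−2, and eigenvalue −1 with multiplicity n. -/
open Matrix Polynomial

/-- The all-ones matrix. -/
def allOnes (ι : Type*) (R : Type*) [One R] : Matrix ι ι R := Matrix.of fun _ _ => 1

/-- The block-swap matrix. -/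
def swapM (m : ℕ) (R : Type*) [Zero R] [One R] :
    Matrix (Fin m ⊕ Fin m) (Fin m ⊕ Fin m) R := Matrix.fromBlocks 0 1 1 0

/-- Embedding of two copies of `Fin m` into `ZMod n`. -/
def emb (n m : ℕ) : Fin m ⊕ Fin m → ZMod n
  | .inl a => ((a : ℕ) : ZMod n)
  | .inr a => (((a : ℕ) + m : ℕ) : ZMod n)

/-- Enumeration of the dihedral group. -/
def dihf (n m : ℕ) : (Fin m ⊕ Fin m) ⊕ (Fin m ⊕ Fin m) → DihedralGroup n
  | .inl y => .r (emb n m y)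
  | .inr y => .sr (emb n m y)

section DetLemmas

variable {R : Type*} [CommRing R]

lemma det_fromBlocks_comm {ι : Type*} [DecidableEq ι] [Fintype ι] [IsDomain R]
    (A B C D : Matrix ι ι R) (hcomm : C * D = D * C) (hD : D.det ≠ 0) :
    (Matrix.fromBlocks A B C D).det = (A * D - B * C).det := by
  have key : Matrix.fromBlocks A B C D * Matrix.fromBlocks D 0 (-C) 1
      = Matrix.fromBlocks (A * D - B * C) B 0 D := by
    simp [Matrix.fromBlocks_multiply, hcomm, Matrix.mul_neg, sub_eq_add_neg]
  have h1 := congrArg Matrix.det key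
  rw [Matrix.det_mul, Matrix.det_fromBlocks_zero₁₂, Matrix.det_fromBlocks_zero₂₁,
    Matrix.det_one, mul_one] at h1
  exact mul_right_cancel₀ hD h1

lemma det_smul_one_add_smul_allOnes_field {K : Type*} [Field K] {m : ℕ} (hm : m ≠ 0)
    (c d : K) (hc : c ≠ 0) :
    (c • (1 : Matrix (Fin m) (Fin m) K) + d • allOnes (Fin m) K).det
      = c ^ (m - 1) * (c + m * d) := by
  have hJ : (c • (1 : Matrix (Fin m) (Fin m) K) + d • allOnes (Fin m) K)
      = c • (1 + Matrix.replicateCol Unit (fun _ => d / c) * Matrix.replicateRow Unit (fun _ => (1 : K))) := by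
    ext i j
    simp only [Matrix.add_apply, Matrix.smul_apply, allOnes, Matrix.of_apply, smul_eq_mul,
      Matrix.mul_apply, Matrix.replicateCol_apply, Matrix.replicateRow_apply, Finset.univ_unique,
      Finset.sum_singleton, mul_one, mul_add]
    rw [mul_div_cancel₀ _ hc]
  rw [hJ, Matrix.det_smul, Matrix.det_one_add_replicateCol_mul_replicateRow]
  have hdot : (fun _ : Fin m => (1 : K)) ⬝ᵥ (fun _ => d / c) = m * (d / c) := by
    simp [dotProduct, Finset.sum_const, nsmul_eq_mul]
  rw [hdot, Fintype.card_fin]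
  obtain ⟨k, rfl⟩ : ∃ k, m = k + 1 := ⟨m - 1, by omega⟩
  simp only [Nat.add_sub_cancel]
  field_simp
  ring

lemma det_smul_one_add_smul_allOnes {R : Type*} [CommRing R] [IsDomain R] {m : ℕ} (hm : m ≠ 0)
    (c d : R) (hc : c ≠ 0) :
    (c • (1 : Matrix (Fin m) (Fin m) R) + d • allOnes (Fin m) R).det
      = c ^ (m - 1) * (c + m * d) := by
  classical
  set K := FractionRing R
  set φ : R →+* K := algebraMap R K with hφ
  have hinj : Function.Injective φ := IsFractionRing.injective R K
  apply hinj
  rw [RingHom.map_det, RingHom.mapMatrix_apply]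
  have hmap : ((c • (1 : Matrix (Fin m) (Fin m) R) + d • allOnes (Fin m) R).map φ)
      = φ c • (1 : Matrix (Fin m) (Fin m) K) + φ d • allOnes (Fin m) K := by
    ext i j
    by_cases h : i = j <;>
      simp [h, allOnes, Matrix.one_apply, Matrix.map_apply]
  rw [hmap, det_smul_one_add_smul_allOnes_field hm _ _
    (fun h => hc (hinj (by rw [h, map_zero])))]
  simp only [_root_.map_mul, _root_.map_add, map_pow, Nat.cast_id, map_natCast]

lemma allOnes_mul_allOnes {m : ℕ} :
    allOnes (Fin m) R * allOnes (Fin m) R = (m : R) • allOnes (Fin m) R := by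
  ext i j
  simp [allOnes, Matrix.mul_apply, Finset.sum_const, nsmul_eq_mul]

lemma aux_mulJ {m : ℕ} (a b a' b' : R) :
    (a • (1 : Matrix (Fin m) (Fin m) R) + b • allOnes (Fin m) R)
      * (a' • 1 + b' • allOnes (Fin m) R)
    = (a * a') • 1 + (a * b' + b * a' + (m : R) * (b * b')) • allOnes (Fin m) R := by
  simp only [Matrix.add_mul, Matrix.mul_add, Matrix.smul_mul, Matrix.mul_smul,
    Matrix.one_mul, Matrix.mul_one, allOnes_mul_allOnes, smul_smul]
  module

end DetLemmas

/-- The Cayley graph of a group with connection set `S`. -/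
def cayley {G : Type*} [Group G] (S : Set G) : SimpleGraph G :=
  SimpleGraph.fromRel (fun x y => x⁻¹ * y ∈ S)

/-- The connection set `Ψ = {b, ab, …, a^{n-1}b} ∪ {a^{n/2}}` in the dihedral group. -/
def Psi (n : ℕ) : Set (DihedralGroup n) :=
  {x | ∃ i : ZMod n, x = DihedralGroup.sr i} ∪ {DihedralGroup.r ((n / 2 : ℕ) : ZMod n)}
set_option maxHeartbeats 1600000 in
open scoped Classical in
theorem cayley_adjMatrix_charpoly (n : ℕ) (hn : 4 ≤ n) (hev : Even n) [NeZero n] :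
    (Matrix.of fun u v : DihedralGroup n =>
        if (cayley (Psi n)).Adj u v then (1 : ℝ) else 0).charpoly =
      (Polynomial.X - Polynomial.C ((n : ℝ) + 1)) *
        (Polynomial.X - Polynomial.C (1 - (n : ℝ))) *
        (Polynomial.X - 1) ^ (n - 2) * (Polynomial.X + 1) ^ n := by
  obtain ⟨m, hm⟩ := hev
  subst hm
  have hm2 : 2 ≤ m := by omega
  have hdvd : (m + m) / 2 = m := by omega
  set c : ZMod (m + m) := ((m : ℕ) : ZMod (m + m)) with hcdef
  have hcc : c + c = 0 := by rw [hcdef, ← Nat.cast_add, ZMod.natCast_self]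
  have hnat : ∀ x y : ℕ, (((x : ℕ) : ZMod (m + m)) = ((y : ℕ) : ZMod (m + m)))
      ↔ x % (m + m) = y % (m + m) := fun x y => ZMod.natCast_eq_natCast_iff' x y (m + m)
  have hcne : c ≠ 0 := by
    rw [hcdef]
    intro h
    rw [show (0 : ZMod (m + m)) = ((0 : ℕ) : ZMod (m + m)) by simp, hnat,
      Nat.mod_eq_of_lt (by omega), Nat.zero_mod] at h
    omega
  -- membership in Psi
  have hmem_r : ∀ z : ZMod (m + m), (DihedralGroup.r z ∈ Psi (m + m)) ↔ z = c := by
    intro z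
    simp [Psi, hdvd, ← hcdef]
  have hmem_sr : ∀ z : ZMod (m + m), DihedralGroup.sr z ∈ Psi (m + m) :=
    fun z => Or.inl ⟨z, rfl⟩
  have hinv_r : ∀ i : ZMod (m + m), (DihedralGroup.r i)⁻¹ = DihedralGroup.r (-i) := by
    intro i
    apply inv_eq_of_mul_eq_one_right
    rw [DihedralGroup.r_mul_r, add_neg_cancel, DihedralGroup.one_def]
  have hinv_sr : ∀ i : ZMod (m + m), (DihedralGroup.sr i)⁻¹ = DihedralGroup.sr i :=
    fun i => inv_eq_of_mul_eq_one_right (DihedralGroup.sr_mul_self i)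
  have hkey : ∀ i j : ZMod (m + m), ((j = i + c ∨ i = j + c) ↔ j = i + c) := by
    intro i j
    constructor
    · rintro (h | h)
      · exact h
      · rw [h, add_assoc, hcc, add_zero]
    · exact Or.inl
  have conv1 : ∀ i j : ZMod (m + m), (-i + j = c ↔ j = i + c) := by
    intro i j
    constructor <;> intro h <;> linear_combination h
  -- adjacency characterizations
  have adj_rr : ∀ i j : ZMod (m + m),
      ((cayley (Psi (m + m))).Adj (DihedralGroup.r i) (DihedralGroup.r j) ↔ j = i + c) := by
    intro i j
    rw [cayley, SimpleGraph.fromRel_adj, hinv_r, hinv_r, DihedralGroup.r_mul_r,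
      DihedralGroup.r_mul_r, hmem_r, hmem_r, conv1, conv1, hkey]
    constructor
    · exact fun h => h.2
    · intro h
      refine ⟨?_, h⟩
      intro heq
      rw [DihedralGroup.r.injEq] at heq
      rw [heq] at h
      exact hcne (left_eq_add.mp h)
  have adj_ss : ∀ i j : ZMod (m + m),
      ((cayley (Psi (m + m))).Adj (DihedralGroup.sr i) (DihedralGroup.sr j) ↔ j = i + c) := by
    intro i j
    rw [cayley, SimpleGraph.fromRel_adj, hinv_sr, hinv_sr, DihedralGroup.sr_mul_sr,
      DihedralGroup.sr_mul_sr, hmem_r, hmem_r, sub_eq_iff_eq_add', sub_eq_iff_eq_add', hkey]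
    constructor
    · exact fun h => h.2
    · intro h
      refine ⟨?_, h⟩
      intro heq
      rw [DihedralGroup.sr.injEq] at heq
      rw [heq] at h
      exact hcne (left_eq_add.mp h)
  have adj_rs : ∀ i j : ZMod (m + m),
      (cayley (Psi (m + m))).Adj (DihedralGroup.r i) (DihedralGroup.sr j) := by
    intro i j
    rw [cayley, SimpleGraph.fromRel_adj]
    exact ⟨by simp, Or.inl (by rw [hinv_r, DihedralGroup.r_mul_sr]; exact hmem_sr _)⟩
  have adj_sr : ∀ i j : ZMod (m + m),
      (cayley (Psi (m + m))).Adj (DihedralGroup.sr i) (DihedralGroup.r j) := by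
    intro i j
    rw [cayley, SimpleGraph.fromRel_adj]
    exact ⟨by simp, Or.inl (by rw [hinv_sr, DihedralGroup.sr_mul_r]; exact hmem_sr _)⟩
  -- the embedding condition
  have hE : ∀ y y' : Fin m ⊕ Fin m,
      (emb (m + m) m y' = emb (m + m) m y + c ↔ y' = Sum.swap y) := by
    rintro (a | a) (b | b)
    · have ha := a.isLt; have hb := b.isLt
      show ((b : ℕ) : ZMod (m + m)) = ((a : ℕ) : ZMod (m + m)) + c ↔ _
      rw [hcdef, ← Nat.cast_add, hnat, Nat.mod_eq_of_lt (by omega), Nat.mod_eq_of_lt (by omega)]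
      simp only [Sum.swap_inl]
      exact iff_of_false (by omega) (by simp)
    · have ha := a.isLt; have hb := b.isLt
      show (((b : ℕ) + m : ℕ) : ZMod (m + m)) = ((a : ℕ) : ZMod (m + m)) + c ↔ _
      rw [hcdef, ← Nat.cast_add, hnat, Nat.mod_eq_of_lt (by omega), Nat.mod_eq_of_lt (by omega)]
      simp only [Sum.swap_inl, Sum.inr.injEq, Fin.ext_iff]
      omega
    · have ha := a.isLt; have hb := b.isLt
      show ((b : ℕ) : ZMod (m + m)) = (((a : ℕ) + m : ℕ) : ZMod (m + m)) + c ↔ _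
      rw [hcdef, ← Nat.cast_add, hnat, Nat.mod_eq_of_lt (by omega), add_assoc,
        Nat.add_mod_right, Nat.mod_eq_of_lt (by omega)]
      simp only [Sum.swap_inr, Sum.inl.injEq, Fin.ext_iff]
    · have ha := a.isLt; have hb := b.isLt
      show (((b : ℕ) + m : ℕ) : ZMod (m + m)) = (((a : ℕ) + m : ℕ) : ZMod (m + m)) + c ↔ _
      rw [hcdef, ← Nat.cast_add, hnat, Nat.mod_eq_of_lt (by omega), add_assoc,
        Nat.add_mod_right, Nat.mod_eq_of_lt (by omega)]
      simp only [Sum.swap_inr]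
      exact iff_of_false (by omega) (by simp)
  -- injectivity of the embedding
  have hembinj : Function.Injective (emb (m + m) m) := by
    rintro (a | a) (b | b) h
    · have ha := a.isLt; have hb := b.isLt
      rw [show emb (m+m) m (Sum.inl a) = ((a : ℕ) : ZMod (m+m)) from rfl,
        show emb (m+m) m (Sum.inl b) = ((b : ℕ) : ZMod (m+m)) from rfl, hnat,
        Nat.mod_eq_of_lt (by omega), Nat.mod_eq_of_lt (by omega)] at h
      exact congrArg Sum.inl (Fin.ext h)
    · have ha := a.isLt; have hb := b.isLt
      rw [show emb (m+m) m (Sum.inl a) = ((a : ℕ) : ZMod (m+m)) from rfl,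
        show emb (m+m) m (Sum.inr b) = (((b : ℕ) + m : ℕ) : ZMod (m+m)) from rfl, hnat,
        Nat.mod_eq_of_lt (by omega), Nat.mod_eq_of_lt (by omega)] at h
      omega
    · have ha := a.isLt; have hb := b.isLt
      rw [show emb (m+m) m (Sum.inr a) = (((a : ℕ) + m : ℕ) : ZMod (m+m)) from rfl,
        show emb (m+m) m (Sum.inl b) = ((b : ℕ) : ZMod (m+m)) from rfl, hnat,
        Nat.mod_eq_of_lt (by omega), Nat.mod_eq_of_lt (by omega)] at h
      omega
    · have ha := a.isLt; have hb := b.isLt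
      rw [show emb (m+m) m (Sum.inr a) = (((a : ℕ) + m : ℕ) : ZMod (m+m)) from rfl,
        show emb (m+m) m (Sum.inr b) = (((b : ℕ) + m : ℕ) : ZMod (m+m)) from rfl, hnat,
        Nat.mod_eq_of_lt (by omega), Nat.mod_eq_of_lt (by omega)] at h
      exact congrArg Sum.inr (Fin.ext (by omega))
  have hfinj : Function.Injective (dihf (m + m) m) := by
    rintro (y | y) (y' | y') h
    · exact congrArg Sum.inl (hembinj (by injection h))
    · exact absurd h (by simp [dihf])
    · exact absurd h (by simp [dihf])
    · exact congrArg Sum.inr (hembinj (by injection h))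
  have hbij : Function.Bijective (dihf (m + m) m) := by
    rw [Fintype.bijective_iff_injective_and_card]
    refine ⟨hfinj, ?_⟩
    simp [DihedralGroup.card, ZMod.card]
    omega
  set e : ((Fin m ⊕ Fin m) ⊕ (Fin m ⊕ Fin m)) ≃ DihedralGroup (m + m) :=
    Equiv.ofBijective _ hbij with hedef
  set B : Matrix (Fin m ⊕ Fin m) (Fin m ⊕ Fin m) ℝ := swapM m ℝ with hBdef
  set J : Matrix (Fin m ⊕ Fin m) (Fin m ⊕ Fin m) ℝ := allOnes _ ℝ with hJdef
  set M : Matrix (DihedralGroup (m + m)) (DihedralGroup (m + m)) ℝ :=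
    Matrix.of fun u v : DihedralGroup (m + m) =>
      if (cayley (Psi (m + m))).Adj u v then (1 : ℝ) else 0 with hMdef
  have hsub : M.submatrix (dihf (m + m) m) (dihf (m + m) m) = Matrix.fromBlocks B J J B := by
    ext i j
    rcases i with y | y <;> rcases j with y' | y'
    · show (if (cayley (Psi (m + m))).Adj (DihedralGroup.r (emb (m+m) m y))
          (DihedralGroup.r (emb (m+m) m y')) then (1 : ℝ) else 0) = B y y'
      rw [if_congr ((adj_rr _ _).trans (hE y y')) rfl rfl]
      rcases y with a | a <;> rcases y' with b | b <;>
        simp [hBdef, swapM, Matrix.one_apply, eq_comm]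
    · show (if (cayley (Psi (m + m))).Adj (DihedralGroup.r (emb (m+m) m y))
          (DihedralGroup.sr (emb (m+m) m y')) then (1 : ℝ) else 0) = J y y'
      rw [if_pos (adj_rs _ _)]
      simp [hJdef, allOnes]
    · show (if (cayley (Psi (m + m))).Adj (DihedralGroup.sr (emb (m+m) m y))
          (DihedralGroup.r (emb (m+m) m y')) then (1 : ℝ) else 0) = J y y'
      rw [if_pos (adj_sr _ _)]
      simp [hJdef, allOnes]
    · show (if (cayley (Psi (m + m))).Adj (DihedralGroup.sr (emb (m+m) m y))
          (DihedralGroup.sr (emb (m+m) m y')) then (1 : ℝ) else 0) = B y y'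
      rw [if_congr ((adj_ss _ _).trans (hE y y')) rfl rfl]
      rcases y with a | a <;> rcases y' with b | b <;>
        simp [hBdef, swapM, Matrix.one_apply, eq_comm]
  -- pass to the reindexed block matrix
  rw [← Matrix.charpoly_reindex e.symm M]
  have hre : Matrix.reindex e.symm e.symm M = Matrix.fromBlocks B J J B := by
    rw [Matrix.reindex_apply, Equiv.symm_symm]
    exact hsub
  rw [hre]
  have hcp : (Matrix.fromBlocks B J J B).charpoly
      = (Matrix.charmatrix (Matrix.fromBlocks B J J B)).det := rfl
  rw [hcp, Matrix.charmatrix_fromBlocks]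
  set Bp : Matrix (Fin m ⊕ Fin m) (Fin m ⊕ Fin m) (Polynomial ℝ) :=
    swapM m (Polynomial ℝ) with hBp
  set Jp : Matrix (Fin m ⊕ Fin m) (Fin m ⊕ Fin m) (Polynomial ℝ) :=
    allOnes _ (Polynomial ℝ) with hJp
  have hJmap : J.map Polynomial.C = Jp := by
    ext i j
    simp [hJdef, hJp, allOnes]
  have hBchar : Matrix.charmatrix B = (Polynomial.X : Polynomial ℝ) • 1 - Bp := by
    rw [Matrix.charmatrix, Matrix.scalar_apply, ← Matrix.smul_one_eq_diagonal,
      RingHom.mapMatrix_apply]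
    congr 1
    ext i j
    rcases i with a | a <;> rcases j with b | b <;>
      simp [hBdef, hBp, swapM, Matrix.map_apply, Matrix.one_apply, apply_ite]
  have hJsplit : Jp = Matrix.fromBlocks (allOnes (Fin m) (Polynomial ℝ))
      (allOnes (Fin m) (Polynomial ℝ)) (allOnes (Fin m) (Polynomial ℝ))
      (allOnes (Fin m) (Polynomial ℝ)) := by
    ext i j
    rcases i with a | a <;> rcases j with b | b <;> rfl
  have hBB : Bp * Bp = 1 := by
    rw [hBp, swapM, Matrix.fromBlocks_multiply]
    simp [← Matrix.fromBlocks_one]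
  have hJpB : Jp * Bp = Jp := by
    rw [hJsplit, hBp, swapM, Matrix.fromBlocks_multiply]
    simp
  have hBJp : Bp * Jp = Jp := by
    rw [hJsplit, hBp, swapM, Matrix.fromBlocks_multiply]
    simp
  have hJJ : Jp * Jp = ((m + m : ℕ) : Polynomial ℝ) • Jp := by
    ext i j
    simp [hJp, allOnes, Matrix.mul_apply, Finset.sum_const, Fintype.card_sum, nsmul_eq_mul]
  have hPne : ((Polynomial.X : Polynomial ℝ) •
      (1 : Matrix (Fin m ⊕ Fin m) (Fin m ⊕ Fin m) (Polynomial ℝ)) - Bp).det ≠ 0 := by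
    rw [← hBchar]
    exact (Matrix.charpoly_monic B).ne_zero
  have hcomm1 : (-Jp) * ((Polynomial.X : Polynomial ℝ) • 1 - Bp)
      = ((Polynomial.X : Polynomial ℝ) • 1 - Bp) * (-Jp) := by
    simp [Matrix.neg_mul, Matrix.mul_neg, Matrix.sub_mul, Matrix.mul_sub, Matrix.smul_mul,
      Matrix.mul_smul, Matrix.one_mul, Matrix.mul_one, hJpB, hBJp]
  rw [hJmap, hBchar, det_fromBlocks_comm _ _ _ _ hcomm1 hPne]
  have hL : ((Polynomial.X : Polynomial ℝ) • 1 - Bp) * ((Polynomial.X : Polynomial ℝ) • 1 - Bp)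
        - (-Jp) * (-Jp)
      = Matrix.fromBlocks
          ((Polynomial.X * Polynomial.X + 1 : Polynomial ℝ) • (1 : Matrix (Fin m) (Fin m) (Polynomial ℝ))
            + (-((m + m : ℕ) : Polynomial ℝ)) • allOnes (Fin m) (Polynomial ℝ))
          ((-(2 * Polynomial.X) : Polynomial ℝ) • (1 : Matrix (Fin m) (Fin m) (Polynomial ℝ))
            + (-((m + m : ℕ) : Polynomial ℝ)) • allOnes (Fin m) (Polynomial ℝ))
          ((-(2 * Polynomial.X) : Polynomial ℝ) • (1 : Matrix (Fin m) (Fin m) (Polynomial ℝ))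
            + (-((m + m : ℕ) : Polynomial ℝ)) • allOnes (Fin m) (Polynomial ℝ))
          ((Polynomial.X * Polynomial.X + 1 : Polynomial ℝ) • (1 : Matrix (Fin m) (Fin m) (Polynomial ℝ))
            + (-((m + m : ℕ) : Polynomial ℝ)) • allOnes (Fin m) (Polynomial ℝ)) := by
    have expand : ((Polynomial.X : Polynomial ℝ) • 1 - Bp)
          * ((Polynomial.X : Polynomial ℝ) • 1 - Bp) - (-Jp) * (-Jp)
        = (Polynomial.X * Polynomial.X : Polynomial ℝ) •
            (1 : Matrix (Fin m ⊕ Fin m) (Fin m ⊕ Fin m) (Polynomial ℝ)) + 1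
          - ((Polynomial.X : Polynomial ℝ) • Bp + (Polynomial.X : Polynomial ℝ) • Bp) - ((m + m : ℕ) : Polynomial ℝ) • Jp := by
      simp only [Matrix.neg_mul, Matrix.mul_neg, neg_neg, Matrix.sub_mul, Matrix.mul_sub,
        Matrix.smul_mul, Matrix.mul_smul, Matrix.one_mul, Matrix.mul_one, hBB, hJJ]
      module
    rw [expand]
    refine Matrix.ext fun i j => ?_
    rcases i with a | a <;> rcases j with b | b <;>
      simp only [hBp, hJp, swapM, allOnes, Matrix.sub_apply, Matrix.add_apply, Matrix.smul_apply,
        Matrix.one_apply, Matrix.of_apply, Matrix.zero_apply, Matrix.fromBlocks_apply₁₁,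
        Matrix.fromBlocks_apply₁₂, Matrix.fromBlocks_apply₂₁, Matrix.fromBlocks_apply₂₂,
        Matrix.neg_apply, smul_eq_mul, Sum.inl.injEq, Sum.inr.injEq] <;>
      split_ifs <;> (first | ring1 | contradiction)
  have hXXne : (Polynomial.X * Polynomial.X + 1 : Polynomial ℝ) ≠ 0 := by
    intro h
    have h0 := congrArg (Polynomial.eval 0) h
    simp at h0
  have hcomm2 : ((-(2 * Polynomial.X) : Polynomial ℝ) • (1 : Matrix (Fin m) (Fin m) (Polynomial ℝ))
        + (-((m + m : ℕ) : Polynomial ℝ)) • allOnes (Fin m) (Polynomial ℝ))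
      * ((Polynomial.X * Polynomial.X + 1 : Polynomial ℝ) • (1 : Matrix (Fin m) (Fin m) (Polynomial ℝ))
        + (-((m + m : ℕ) : Polynomial ℝ)) • allOnes (Fin m) (Polynomial ℝ))
      = ((Polynomial.X * Polynomial.X + 1 : Polynomial ℝ) • (1 : Matrix (Fin m) (Fin m) (Polynomial ℝ))
        + (-((m + m : ℕ) : Polynomial ℝ)) • allOnes (Fin m) (Polynomial ℝ))
      * ((-(2 * Polynomial.X) : Polynomial ℝ) • (1 : Matrix (Fin m) (Fin m) (Polynomial ℝ))
        + (-((m + m : ℕ) : Polynomial ℝ)) • allOnes (Fin m) (Polynomial ℝ)) := by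
    rw [aux_mulJ, aux_mulJ]
    module
  have h2ne : (Polynomial.X * Polynomial.X + 1 : Polynomial ℝ)
      + (m : Polynomial ℝ) * (-((m + m : ℕ) : Polynomial ℝ)) ≠ 0 := by
    intro h
    have h0 := congrArg (Polynomial.eval 0) h
    have hm' : (2 : ℝ) ≤ (m : ℝ) := by exact_mod_cast hm2
    simp at h0
    nlinarith [h0, hm']
  have hD2ne : (((Polynomial.X * Polynomial.X + 1 : Polynomial ℝ) •
        (1 : Matrix (Fin m) (Fin m) (Polynomial ℝ))
      + (-((m + m : ℕ) : Polynomial ℝ)) • allOnes (Fin m) (Polynomial ℝ)).det) ≠ 0 := by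
    rw [det_smul_one_add_smul_allOnes (by omega) _ _ hXXne]
    exact mul_ne_zero (pow_ne_zero _ hXXne) h2ne
  rw [hL, det_fromBlocks_comm _ _ _ _ hcomm2 hD2ne]
  have hDE : ((Polynomial.X * Polynomial.X + 1 : Polynomial ℝ) • (1 : Matrix (Fin m) (Fin m) (Polynomial ℝ))
        + (-((m + m : ℕ) : Polynomial ℝ)) • allOnes (Fin m) (Polynomial ℝ))
      * ((Polynomial.X * Polynomial.X + 1 : Polynomial ℝ) • (1 : Matrix (Fin m) (Fin m) (Polynomial ℝ))
        + (-((m + m : ℕ) : Polynomial ℝ)) • allOnes (Fin m) (Polynomial ℝ))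
      - ((-(2 * Polynomial.X) : Polynomial ℝ) • (1 : Matrix (Fin m) (Fin m) (Polynomial ℝ))
        + (-((m + m : ℕ) : Polynomial ℝ)) • allOnes (Fin m) (Polynomial ℝ))
      * ((-(2 * Polynomial.X) : Polynomial ℝ) • (1 : Matrix (Fin m) (Fin m) (Polynomial ℝ))
        + (-((m + m : ℕ) : Polynomial ℝ)) • allOnes (Fin m) (Polynomial ℝ))
      = ((Polynomial.X * Polynomial.X + 1) * (Polynomial.X * Polynomial.X + 1)
          - (2 * Polynomial.X) * (2 * Polynomial.X) : Polynomial ℝ) •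
            (1 : Matrix (Fin m) (Fin m) (Polynomial ℝ))
        + ((2 * (-((m + m : ℕ) : Polynomial ℝ))
            * ((Polynomial.X * Polynomial.X + 1) + 2 * Polynomial.X) : Polynomial ℝ)) •
          allOnes (Fin m) (Polynomial ℝ) := by
    rw [aux_mulJ, aux_mulJ]
    module
  have hc3ne : ((Polynomial.X * Polynomial.X + 1) * (Polynomial.X * Polynomial.X + 1)
      - (2 * Polynomial.X) * (2 * Polynomial.X) : Polynomial ℝ) ≠ 0 := by
    intro h
    have h0 := congrArg (Polynomial.eval 0) h
    simp at h0
  rw [hDE, det_smul_one_add_smul_allOnes (by omega) _ _ hc3ne]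
  -- final polynomial identity
  obtain ⟨j, rfl⟩ : ∃ j, m = j + 2 := ⟨m - 2, by omega⟩
  rw [show j + 2 - 1 = j + 1 from rfl,
    show j + 2 + (j + 2) - 2 = 2 * j + 2 from by omega,
    show j + 2 + (j + 2) = 2 * j + 4 from by omega]
  have hfact : ((Polynomial.X * Polynomial.X + 1) * (Polynomial.X * Polynomial.X + 1)
      - (2 * Polynomial.X) * (2 * Polynomial.X) : Polynomial ℝ)
      = ((Polynomial.X - 1) * (Polynomial.X - 1))
        * ((Polynomial.X + 1) * (Polynomial.X + 1)) := by
    ring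
  have hfact2 : ((Polynomial.X * Polynomial.X + 1) * (Polynomial.X * Polynomial.X + 1)
        - (2 * Polynomial.X) * (2 * Polynomial.X) : Polynomial ℝ)
      + ((j + 2 : ℕ) : Polynomial ℝ) * (2 * (-((2 * j + 4 : ℕ) : Polynomial ℝ))
          * ((Polynomial.X * Polynomial.X + 1) + 2 * Polynomial.X))
      = ((Polynomial.X + 1) * (Polynomial.X + 1))
        * ((Polynomial.X - (((2 * j + 4 : ℕ) : Polynomial ℝ) + 1))
          * (Polynomial.X - (1 - ((2 * j + 4 : ℕ) : Polynomial ℝ)))) := by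
    push_cast
    ring
  rw [hfact2, hfact]
  simp only [map_natCast, Polynomial.C_add, Polynomial.C_sub, Polynomial.C_1, mul_pow]
  push_cast
  ring
end

section
/- Let n ≥ 4 be an even integer and Λ = Cay(D_{2n}, Ψ) with Ψ = {b, ab, ..., a^{n-1}b} ∪ {a^{n/2}}. Then Λ is not a distance regular graph. -/
/-- A graph is distance regular if there are intersection numbers `b r`, `c r` such that
for every pair of vertices at distance `r`, the number of neighbors of `u` at distance
`r+1` (resp. `r-1`) from `v` is `b r` (resp. `c r`). -/
def IsDistanceRegular {V : Type*} (G : SimpleGraph V) : Prop :=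
  ∃ b c : ℕ → ℕ, ∀ (u v : V) (r : ℕ), G.dist u v = r →
    ((G.neighborSet u ∩ {w | G.dist v w = r + 1}).ncard = b r ∧
     (G.neighborSet u ∩ {w | G.dist v w = r - 1}).ncard = c r)

open DihedralGroup
theorem cayley_not_distance_regular (n : ℕ) (hn : 4 ≤ n) (hev : Even n) :
    ¬ IsDistanceRegular (cayley (Psi n)) := by
  haveI : NeZero n := ⟨by omega⟩
  obtain ⟨k, hk⟩ := hev
  set m : ZMod n := ((n / 2 : ℕ) : ZMod n) with hm
  set G := cayley (Psi n) with hG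
  have hn2 : 2 ≤ n / 2 := by omega
  have hlt : n / 2 < n := by omega
  have hval : m.val = n / 2 := by
    rw [hm, ZMod.val_natCast, Nat.mod_eq_of_lt hlt]
  -- basic membership facts
  have hsrPsi : ∀ i : ZMod n, sr i ∈ Psi n := fun i => Or.inl ⟨i, rfl⟩
  have hrPsi : r m ∈ Psi n := Or.inr rfl
  have hrPsi' : ∀ j : ZMod n, r j ∈ Psi n → j = m := by
    rintro j (⟨i, h⟩ | h)
    · exact absurd h (by simp)
    · simpa using h
  haveI : Fact (1 < n) := ⟨by omega⟩
  -- m + m = 0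
  have hmm : m + m = 0 := by
    rw [hm, ← Nat.cast_add]
    have : n / 2 + n / 2 = n := by omega
    rw [this, ZMod.natCast_self]
  have hnegm : -m = m := neg_eq_iff_add_eq_zero.2 hmm
  -- adjacency facts
  have hadj_one_sr : ∀ i : ZMod n, G.Adj 1 (sr i) := by
    intro i
    refine ⟨?_, Or.inl ?_⟩
    · exact fun h => by rw [DihedralGroup.one_def] at h; exact (by cases h)
    · simpa using hsrPsi i
  have hadj_one_rm : G.Adj 1 (r m) := by
    refine ⟨?_, Or.inl ?_⟩
    · rw [DihedralGroup.one_def]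
      intro h
      have : (0 : ZMod n) = m := DihedralGroup.r.inj h
      have : (0 : ZMod n).val = m.val := by rw [this]
      rw [ZMod.val_zero, hval] at this
      omega
    · simpa using hrPsi
  have hadj_rm_sr : ∀ i : ZMod n, G.Adj (r m) (sr i) := by
    intro i
    refine ⟨by simp, Or.inl ?_⟩
    show (r m)⁻¹ * sr i ∈ Psi n
    have : (r m)⁻¹ * sr i = sr (i + m) := by
      show r (-m) * sr i = sr (i + m)
      rw [r_mul_sr, hnegm, sub_eq_add_neg, hnegm]
    rw [this]; exact hsrPsi _
  -- sr 0 and sr 1 not adjacent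
  have hone_lt : (1 : ZMod n).val = 1 := ZMod.val_one n
  have h1nm : (1 : ZMod n) ≠ m := by
    intro h
    have := congrArg ZMod.val h
    rw [hone_lt, hval] at this; omega
  have hnadj : ¬ G.Adj (sr 0) (sr 1) := by
    rintro ⟨-, h | h⟩
    · have h1 : (sr (0 : ZMod n))⁻¹ * sr 1 = r 1 := by
        show sr 0 * sr 1 = r 1
        rw [sr_mul_sr, sub_zero]
      rw [h1] at h
      exact h1nm (hrPsi' 1 h)
    · have h1 : (sr (1 : ZMod n))⁻¹ * sr 0 = r (-1) := by
        show sr 1 * sr 0 = r (-1)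
        rw [sr_mul_sr, zero_sub]
      rw [h1] at h
      have h2 := hrPsi' (-1) h
      have h3 : m + 1 = 0 := by rw [← h2]; ring
      rw [hm, ← Nat.cast_one, ← Nat.cast_add, ZMod.natCast_eq_zero_iff] at h3
      have := Nat.le_of_dvd (by omega) h3
      omega
  -- distances
  have hd1 : G.dist 1 (sr 0) = 1 := (SimpleGraph.dist_eq_one_iff_adj).2 (hadj_one_sr 0)
  have hd2 : G.dist 1 (r m) = 1 := (SimpleGraph.dist_eq_one_iff_adj).2 hadj_one_rm
  have hne01 : (sr (0 : ZMod n)) ≠ sr 1 := by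
    intro h
    have : (0 : ZMod n) = 1 := by simpa using h
    have : (0 : ZMod n).val = (1 : ZMod n).val := by rw [this]
    rw [ZMod.val_zero, hone_lt] at this; omega
  have hdist2 : G.dist (sr 0) (sr 1) = 2 := by
    have hreach : G.Reachable (sr 0) (sr 1) :=
      ((hadj_one_sr 0).symm.reachable).trans (hadj_one_sr 1).reachable
    have hle : G.dist (sr 0) (sr 1) ≤ 2 := by
      have := SimpleGraph.dist_le (SimpleGraph.Walk.cons (hadj_one_sr 0).symm
        (SimpleGraph.Walk.cons (hadj_one_sr 1) SimpleGraph.Walk.nil))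
      simpa using this
    have hne0 : G.dist (sr 0) (sr 1) ≠ 0 := by
      intro h
      rcases SimpleGraph.dist_eq_zero_iff_eq_or_not_reachable.1 h with h' | h'
      · exact hne01 h'
      · exact h' hreach
    have hne1 : G.dist (sr 0) (sr 1) ≠ 1 := by
      intro h
      exact hnadj ((SimpleGraph.dist_eq_one_iff_adj).1 h)
    omega
  -- the contradiction
  rintro ⟨b, c, h⟩
  have hA := (h 1 (r m) 1 hd2).1
  have hB := (h 1 (sr 0) 1 hd1).1
  -- set A is empty
  have hAempty : (G.neighborSet 1 ∩ {w | G.dist (r m) w = 1 + 1}) = ∅ := by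
    ext w
    simp only [Set.mem_inter_iff, SimpleGraph.mem_neighborSet, Set.mem_setOf_eq,
      Set.mem_empty_iff_false, iff_false, not_and]
    intro hadj hd
    rcases hadj with ⟨hne, hmem | hmem⟩
    · rw [inv_one, one_mul] at hmem
      rcases hmem with ⟨i, rfl⟩ | hmem
      · have : G.dist (r m) (sr i) = 1 :=
          (SimpleGraph.dist_eq_one_iff_adj).2 (hadj_rm_sr i)
        rw [this] at hd; omega
      · simp only [Set.mem_singleton_iff] at hmem
        rw [hmem] at hd
        rw [SimpleGraph.dist_self] at hd; omega
    · rw [mul_one] at hmem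
      rcases hmem with ⟨i, hi⟩ | hmem
      · have hw : w = sr i := by
          have : w = (sr i)⁻¹ := by rw [← hi, inv_inv]
          simpa using this
        rw [hw] at hd
        have : G.dist (r m) (sr i) = 1 :=
          (SimpleGraph.dist_eq_one_iff_adj).2 (hadj_rm_sr i)
        rw [this] at hd; omega
      · simp only [Set.mem_singleton_iff] at hmem
        have hw : w = (r m)⁻¹ := by rw [← hmem, inv_inv]
        have : (r m)⁻¹ = r m := by
          show r (-m) = r m; rw [hnegm]
        rw [this] at hw
        rw [hw, SimpleGraph.dist_self] at hd; omega
  have hb0 : b 1 = 0 := by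
    rw [← hA, hAempty, Set.ncard_empty]
  -- set B contains sr 1
  have hBmem : sr 1 ∈ (G.neighborSet 1 ∩ {w | G.dist (sr 0) w = 1 + 1}) := by
    exact ⟨hadj_one_sr 1, by simpa using hdist2⟩
  have hBpos : 0 < (G.neighborSet 1 ∩ {w | G.dist (sr 0) w = 1 + 1}).ncard :=
    (Set.ncard_pos (Set.toFinite _)).2 ⟨_, hBmem⟩
  rw [hB, hb0] at hBpos
  exact Nat.lt_irrefl 0 hBpos
end

section
/- Let n ≥ 4 be an even integer and Λ = Cay(D_{2n}, Ψ) with Ψ = {b, ab, ..., a^{n-1}b} ∪ {a^{n/2}}. The complement of Λ is isomorphic to the disjoint union of 2 copies of the cocktail party graph CP(n/2) (the complete multipartite graph with n/2 parts of size 2). -/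
namespace CayleyAux

open DihedralGroup

lemma r_inv {n : ℕ} (i : ZMod n) : (r i)⁻¹ = r (-i) := rfl
lemma sr_inv {n : ℕ} (i : ZMod n) : (sr i)⁻¹ = sr i := rfl

lemma r_mem_Psi {n : ℕ} (k : ZMod n) : r k ∈ Psi n ↔ k = ((n / 2 : ℕ) : ZMod n) := by
  simp [Psi]

lemma sr_mem_Psi {n : ℕ} (k : ZMod n) : sr k ∈ Psi n := Or.inl ⟨k, rfl⟩

lemma keyNat (m a b : ℕ) (hm : 0 < m) (ha : a < 2 * m) (hb : b < 2 * m) :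
    (¬a = b ∧ ¬(b = (m + a) % (2 * m)) ∧ ¬(a = (m + b) % (2 * m))) ↔ ¬a % m = b % m := by
  have e1 : (m + a) % (2 * m) = if a < m then m + a else a - m := by
    split
    · exact Nat.mod_eq_of_lt (by omega)
    · rw [Nat.mod_eq_sub_mod (by omega)]
      have : m + a - 2 * m = a - m := by omega
      rw [this, Nat.mod_eq_of_lt (by omega)]
  have e2 : (m + b) % (2 * m) = if b < m then m + b else b - m := by
    split
    · exact Nat.mod_eq_of_lt (by omega)
    · rw [Nat.mod_eq_sub_mod (by omega)]
      have : m + b - 2 * m = b - m := by omega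
      rw [this, Nat.mod_eq_of_lt (by omega)]
  have e3 : a % m = if a < m then a else a - m := by
    split
    · exact Nat.mod_eq_of_lt (by omega)
    · rw [Nat.mod_eq_sub_mod (by omega), Nat.mod_eq_of_lt (by omega)]
  have e4 : b % m = if b < m then b else b - m := by
    split
    · exact Nat.mod_eq_of_lt (by omega)
    · rw [Nat.mod_eq_sub_mod (by omega), Nat.mod_eq_of_lt (by omega)]
  rw [e1, e2, e3, e4]
  split <;> split <;> omega

/-- Encoding of `ZMod (2*m)` as a pair. -/
def enc (m : ℕ) (hm : 0 < m) (i : ZMod (2 * m)) : Σ _ : Fin m, Fin 2 :=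
  haveI : NeZero (2 * m) := ⟨by omega⟩
  ⟨⟨i.val % m, Nat.mod_lt _ hm⟩, ⟨i.val / m, (Nat.div_lt_iff_lt_mul hm).mpr i.val_lt⟩⟩

def encEquiv (m : ℕ) (hm : 0 < m) : ZMod (2 * m) ≃ Σ _ : Fin m, Fin 2 where
  toFun := enc m hm
  invFun p := ((p.2.val * m + p.1.val : ℕ) : ZMod (2 * m))
  left_inv i := by
    haveI : NeZero (2 * m) := ⟨by omega⟩
    simp only [enc]
    rw [Nat.div_add_mod' i.val m]
    exact ZMod.natCast_rightInverse i
  right_inv p := by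
    obtain ⟨⟨a, ha⟩, ⟨b, hb⟩⟩ := p
    haveI : NeZero (2 * m) := ⟨by omega⟩
    simp only [enc]
    interval_cases b
    · have hv : ((a : ℕ) : ZMod (2 * m)).val = a := ZMod.val_natCast_of_lt (by omega)
      have h1 : a % m = a := Nat.mod_eq_of_lt ha
      have h2 : a / m = 0 := Nat.div_eq_of_lt ha
      simp [hv, h1, h2, Fin.ext_iff]
    · have hv : ((m : ZMod (2 * m)) + (a : ZMod (2 * m))).val = m + a := by
        rw [← Nat.cast_add]; exact ZMod.val_natCast_of_lt (by omega)
      have hv' : (((m + a : ℕ)) : ZMod (2 * m)).val = m + a := ZMod.val_natCast_of_lt (by omega)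
      have h1 : (m + a) % m = a := by rw [Nat.add_mod_left, Nat.mod_eq_of_lt ha]
      have h2 : (m + a) / m = 1 := by rw [Nat.add_div_left _ hm, Nat.div_eq_of_lt ha]
      simp [hv, hv', h1, h2, Fin.ext_iff]

lemma zkey (m : ℕ) (hm : 0 < m) (i j : ZMod (2 * m)) :
    (¬i = j ∧ ¬(j - i = ((m : ℕ) : ZMod (2 * m))) ∧ ¬(i - j = ((m : ℕ) : ZMod (2 * m)))) ↔
      ¬(enc m hm i).1 = (enc m hm j).1 := by
  haveI : NeZero (2 * m) := ⟨by omega⟩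
  have hc : (((m : ℕ)) : ZMod (2 * m)).val = m := ZMod.val_natCast_of_lt (by omega)
  have hij : i = j ↔ i.val = j.val := ((ZMod.val_injective _).eq_iff).symm
  have h1 : (j - i = ((m : ℕ) : ZMod (2 * m))) ↔ j.val = (m + i.val) % (2 * m) := by
    rw [sub_eq_iff_eq_add]
    constructor
    · intro h; rw [h, ZMod.val_add, hc]
    · intro h; apply ZMod.val_injective; rw [ZMod.val_add, hc, ← h]
  have h2 : (i - j = ((m : ℕ) : ZMod (2 * m))) ↔ i.val = (m + j.val) % (2 * m) := by
    rw [sub_eq_iff_eq_add]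
    constructor
    · intro h; rw [h, ZMod.val_add, hc]
    · intro h; apply ZMod.val_injective; rw [ZMod.val_add, hc, ← h]
  rw [hij, h1, h2]
  simp only [enc, ne_eq, Fin.mk.injEq]
  exact keyNat m i.val j.val hm i.val_lt j.val_lt

def dsplit (m : ℕ) : DihedralGroup (2 * m) ≃ (ZMod (2 * m) ⊕ ZMod (2 * m)) where
  toFun x := match x with
    | r j => Sum.inl j
    | sr j => Sum.inr j
  invFun x := match x with
    | Sum.inl j => r j
    | Sum.inr j => sr j
  left_inv := by rintro (x | x) <;> rfl
  right_inv := by rintro (x | x) <;> rfl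

theorem aux (m : ℕ) (hm : 0 < m) :
    Nonempty ((cayley (Psi (2 * m)))ᶜ ≃g
      ((SimpleGraph.completeMultipartiteGraph fun _ : Fin m => Fin 2).sum
        (SimpleGraph.completeMultipartiteGraph fun _ : Fin m => Fin 2))) := by
  haveI : NeZero (2 * m) := ⟨by omega⟩
  have hhalf : (2 * m) / 2 = m := by omega
  refine ⟨⟨(dsplit m).trans (Equiv.sumCongr (encEquiv m hm) (encEquiv m hm)), ?_⟩⟩
  rintro (i | i) (j | j) <;>
    simp only [dsplit, encEquiv, Equiv.trans_apply, Equiv.sumCongr_apply, Equiv.coe_fn_mk,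
      Sum.map_inl, Sum.map_inr, SimpleGraph.sum_adj, SimpleGraph.compl_adj, cayley,
      SimpleGraph.fromRel_adj, r_inv, sr_inv, r_mul_r, r_mul_sr, sr_mul_r, sr_mul_sr,
      r_mem_Psi, sr_mem_Psi, hhalf, SimpleGraph.comap_adj, SimpleGraph.top_adj, ne_eq,
      r.injEq, sr.injEq, or_true, true_or, not_true, and_false, iff_false, not_and, not_or,
      not_not, reduceCtorEq, not_false_iff, false_iff, and_true, true_and, neg_add_eq_sub] <;>
    rw [← zkey m hm i j] <;> tauto
end CayleyAux

theorem cayley_compl_iso_two_cocktail (n : ℕ) (hn : 4 ≤ n) (hev : Even n) :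
    Nonempty ((cayley (Psi n))ᶜ ≃g
      ((SimpleGraph.completeMultipartiteGraph fun _ : Fin (n / 2) => Fin 2).sum
        (SimpleGraph.completeMultipartiteGraph fun _ : Fin (n / 2) => Fin 2))) := by
  obtain ⟨k, hk⟩ := hev
  obtain ⟨m, rfl⟩ : ∃ m, n = 2 * m := ⟨k, by omega⟩
  have hhalf : (2 * m) / 2 = m := by omega
  rw [hhalf]
  exact CayleyAux.aux m (by omega)
end

section
/- Let n ≥ 4 be an even integer and Λ = Cay(D_{2n}, Ψ) with Ψ = {b, ab, ..., a^{n-1}b} ∪ {a^{n/2}}. The set R = {a, a^2, ..., a^{n/2}} ∪ {ab, a^2b, ..., a^{n/2}b} is a resolving set of Λ. -/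
open DihedralGroup SimpleGraph

section helpers
variable {n : ℕ}

lemma r_inv (a : ZMod n) : (r a)⁻¹ = r (-a) :=
  inv_eq_of_mul_eq_one_right (by rw [r_mul_r, add_neg_cancel, ← one_def])

lemma sr_inv (a : ZMod n) : (sr a)⁻¹ = sr a :=
  inv_eq_of_mul_eq_one_right (sr_mul_self a)

lemma adj_r_sr (a b : ZMod n) : (cayley (Psi n)).Adj (r a) (sr b) := by
  refine ⟨by simp, Or.inl (Or.inl ⟨b + a, ?_⟩)⟩
  rw [inv_mul_eq_iff_eq_mul, r_mul_sr, add_sub_cancel_right]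

lemma half_add_half (hev : Even n) :
    ((n / 2 : ℕ) : ZMod n) + ((n / 2 : ℕ) : ZMod n) = 0 := by
  rw [← Nat.cast_add]
  have : n / 2 + n / 2 = n := by obtain ⟨m, hm⟩ := hev; omega
  rw [this, ZMod.natCast_self]

lemma half_ne_zero (hn : 4 ≤ n) : ((n / 2 : ℕ) : ZMod n) ≠ 0 := by
  haveI : NeZero n := ⟨by omega⟩
  intro h
  have h2 : n / 2 < n := by omega
  have := ZMod.val_cast_of_lt h2
  rw [h, ZMod.val_zero] at this
  omega

lemma adj_r_r (hn : 4 ≤ n) (a : ZMod n) :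
    (cayley (Psi n)).Adj (r a) (r (a + ((n / 2 : ℕ) : ZMod n))) := by
  refine ⟨by simpa using half_ne_zero hn, Or.inl (Or.inr ?_)⟩
  show _ ∈ ({r ((n / 2 : ℕ) : ZMod n)} : Set _)
  rw [Set.mem_singleton_iff, r_inv, r_mul_r]
  ring_nf

lemma adj_sr_sr (hn : 4 ≤ n) (a : ZMod n) :
    (cayley (Psi n)).Adj (sr a) (sr (a + ((n / 2 : ℕ) : ZMod n))) := by
  refine ⟨by simpa using half_ne_zero hn, Or.inl (Or.inr ?_)⟩
  show _ ∈ ({r ((n / 2 : ℕ) : ZMod n)} : Set _)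
  rw [Set.mem_singleton_iff, sr_inv, sr_mul_sr]
  ring_nf

lemma not_adj_r_r (hev : Even n) {a b : ZMod n}
    (h2 : b ≠ a + ((n / 2 : ℕ) : ZMod n)) :
    ¬ (cayley (Psi n)).Adj (r a) (r b) := by
  rintro ⟨hne, h | h⟩ <;>
      rw [r_inv, r_mul_r] at h <;>
      simp only [Psi, Set.mem_union, Set.mem_setOf_eq, Set.mem_singleton_iff,
        DihedralGroup.r.injEq] at h <;>
      rcases h with ⟨i, hi⟩ | h
  · exact absurd hi (by simp)
  · exact h2 (by linear_combination h)
  · exact absurd hi (by simp)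
  · exact h2 (by linear_combination -h - half_add_half hev)

lemma not_adj_sr_sr (hev : Even n) {a b : ZMod n} (h1 : b ≠ a)
    (h2 : b ≠ a + ((n / 2 : ℕ) : ZMod n)) :
    ¬ (cayley (Psi n)).Adj (sr a) (sr b) := by
  rintro ⟨hne, h | h⟩ <;>
      rw [sr_inv, sr_mul_sr] at h <;>
      simp only [Psi, Set.mem_union, Set.mem_setOf_eq, Set.mem_singleton_iff,
        DihedralGroup.r.injEq] at h <;>
      rcases h with ⟨i, hi⟩ | h
  · exact absurd hi (by simp)
  · exact h2 (by linear_combination h)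
  · exact absurd hi (by simp)
  · exact h2 (by linear_combination -h - half_add_half hev)

lemma dist_eq_two {V : Type*} {G : SimpleGraph V} {u v w : V} (hne : u ≠ v)
    (hna : ¬G.Adj u v) (h1 : G.Adj u w) (h2 : G.Adj w v) : G.dist u v = 2 := by
  have hle : G.dist u v ≤ 2 := by
    simpa using SimpleGraph.dist_le (SimpleGraph.Walk.cons h1 h2.toWalk)
  have h0 : G.dist u v ≠ 0 := by
    rw [SimpleGraph.dist_ne_zero_iff_ne_and_reachable]
    exact ⟨hne, ⟨Walk.cons h1 h2.toWalk⟩⟩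
  have h1' : G.dist u v ≠ 1 := fun h => hna (SimpleGraph.dist_eq_one_iff_adj.mp h)
  omega

lemma dist_r_sr (a b : ZMod n) : (cayley (Psi n)).dist (r a) (sr b) = 1 :=
  dist_eq_one_iff_adj.mpr (adj_r_sr a b)

lemma dist_sr_r (a b : ZMod n) : (cayley (Psi n)).dist (sr a) (r b) = 1 := by
  rw [SimpleGraph.dist_comm]; exact dist_r_sr b a

lemma dist_rr_one (hn : 4 ≤ n) (a : ZMod n) :
    (cayley (Psi n)).dist (r a) (r (a + ((n / 2 : ℕ) : ZMod n))) = 1 :=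
  dist_eq_one_iff_adj.mpr (adj_r_r hn a)

lemma dist_rr_two (hev : Even n) {a b : ZMod n} (h1 : b ≠ a)
    (h2 : b ≠ a + ((n / 2 : ℕ) : ZMod n)) :
    (cayley (Psi n)).dist (r a) (r b) = 2 :=
  dist_eq_two (by simpa using fun h => h1 h.symm) (not_adj_r_r hev h2)
    (adj_r_sr a 0) (adj_r_sr b 0).symm

lemma dist_srsr_one (hn : 4 ≤ n) (a : ZMod n) :
    (cayley (Psi n)).dist (sr a) (sr (a + ((n / 2 : ℕ) : ZMod n))) = 1 :=
  dist_eq_one_iff_adj.mpr (adj_sr_sr hn a)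

lemma dist_srsr_two (hev : Even n) {a b : ZMod n} (h1 : b ≠ a)
    (h2 : b ≠ a + ((n / 2 : ℕ) : ZMod n)) :
    (cayley (Psi n)).dist (sr a) (sr b) = 2 :=
  dist_eq_two (by simpa using fun h => h1 h.symm) (not_adj_sr_sr hev h1 h2)
    (adj_r_sr 0 a).symm (adj_r_sr 0 b)

lemma C1 (hn : 4 ≤ n) (hev : Even n) (a : ZMod n) :
    ∃ i : ℕ, 1 ≤ i ∧ i ≤ n / 2 ∧
      ((i : ZMod n) = a ∨ (i : ZMod n) = a + ((n / 2 : ℕ) : ZMod n)) := by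
  haveI : NeZero n := ⟨by omega⟩
  have hvc : ((a.val : ℕ) : ZMod n) = a := ZMod.natCast_rightInverse a
  have hvl : a.val < n := ZMod.val_lt a
  by_cases h : 1 ≤ a.val ∧ a.val ≤ n / 2
  · exact ⟨a.val, h.1, h.2, Or.inl hvc⟩
  by_cases h0 : a.val = 0
  · refine ⟨n / 2, by omega, le_refl _, Or.inr ?_⟩
    have : a = 0 := by rwa [ZMod.val_eq_zero] at h0
    rw [this, zero_add]
  · have hv : n / 2 < a.val := by omega
    refine ⟨a.val - n / 2, by omega, by omega, Or.inr ?_⟩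
    rw [Nat.cast_sub hv.le, hvc]
    linear_combination - half_add_half hev

lemma C2 (hn : 4 ≤ n) (hev : Even n) (a : ZMod n) :
    ∃ i : ℕ, 1 ≤ i ∧ i ≤ n / 2 ∧
      ((i : ZMod n) = a ∨
        ((i : ZMod n) ≠ a ∧ (i : ZMod n) ≠ a + ((n / 2 : ℕ) : ZMod n))) := by
  haveI : NeZero n := ⟨by omega⟩
  have hvc : ((a.val : ℕ) : ZMod n) = a := ZMod.natCast_rightInverse a
  by_cases h : 1 ≤ a.val ∧ a.val ≤ n / 2
  · exact ⟨a.val, h.1, h.2, Or.inl hvc⟩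
  · set c := (a + ((n / 2 : ℕ) : ZMod n)).val with hc
    have hcl : c < n := ZMod.val_lt _
    have key : ∀ i : ℕ, 1 ≤ i → i ≤ n / 2 → i ≠ c →
        (i : ZMod n) ≠ a ∧ (i : ZMod n) ≠ a + ((n / 2 : ℕ) : ZMod n) := by
      intro i hi1 hi2 hic
      have hilt : i < n := by omega
      constructor
      · intro he
        have : a.val = i := by rw [← he, ZMod.val_cast_of_lt hilt]
        omega
      · intro he
        have : c = i := by rw [hc, ← he, ZMod.val_cast_of_lt hilt]
        omega
    by_cases hc1 : c = 1
    · exact ⟨2, by omega, by omega, Or.inr (key 2 (by omega) (by omega) (by omega))⟩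
    · exact ⟨1, le_refl _, by omega, Or.inr (key 1 le_rfl (by omega) (by omega))⟩

end helpers

/-- `R` is a resolving set of `G`: distinct vertices are distinguished by distances to `R`. -/
def IsResolvingSet {V : Type*} (G : SimpleGraph V) (R : Set V) : Prop :=
  ∀ u v : V, u ≠ v → ∃ r ∈ R, G.dist u r ≠ G.dist v r

theorem cayley_resolving_set (n : ℕ) (hn : 4 ≤ n) (hev : Even n) :
    IsResolvingSet (cayley (Psi n))
      {x : DihedralGroup n | ∃ i : ℕ, 1 ≤ i ∧ i ≤ n / 2 ∧
        (x = (DihedralGroup.r 1) ^ i ∨ x = (DihedralGroup.r 1) ^ i * DihedralGroup.sr 0)} := by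
  haveI : NeZero n := ⟨by omega⟩
  have hh := half_add_half hev
  rintro (a | a) (b | b) huv
  · -- r a, r b
    have hab : a ≠ b := by simpa using huv
    obtain ⟨i, hi1, hi2, hc⟩ := C1 hn hev a
    refine ⟨r (i : ZMod n), ⟨i, hi1, hi2, Or.inl (r_one_pow i).symm⟩, ?_⟩
    by_cases hb : b = a + ((n / 2 : ℕ) : ZMod n)
    · rcases hc with hc | hc
      · have d1 : (cayley (Psi n)).dist (r a) (r (i : ZMod n)) = 0 := by
          rw [hc]; exact SimpleGraph.dist_self
        have d2 : (cayley (Psi n)).dist (r b) (r (i : ZMod n)) = 1 := by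
          rw [hc, hb, SimpleGraph.dist_comm]; exact dist_rr_one hn a
        omega
      · have hcb : (i : ZMod n) = b := by rw [hc, hb]
        have d2 : (cayley (Psi n)).dist (r b) (r (i : ZMod n)) = 0 := by
          rw [hcb]; exact SimpleGraph.dist_self
        have d1 : (cayley (Psi n)).dist (r a) (r (i : ZMod n)) = 1 := by
          rw [hcb, hb]; exact dist_rr_one hn a
        omega
    · rcases hc with hc | hc
      · have d1 : (cayley (Psi n)).dist (r a) (r (i : ZMod n)) = 0 := by
          rw [hc]; exact SimpleGraph.dist_self
        have d2 : (cayley (Psi n)).dist (r b) (r (i : ZMod n)) = 2 := by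
          rw [hc]
          exact dist_rr_two hev hab (fun he => hb (by linear_combination -he - hh))
        omega
      · have d1 : (cayley (Psi n)).dist (r a) (r (i : ZMod n)) = 1 := by
          rw [hc]; exact dist_rr_one hn a
        have d2 : (cayley (Psi n)).dist (r b) (r (i : ZMod n)) = 2 := by
          rw [hc]
          exact dist_rr_two hev (fun he => hb he.symm)
            (fun he => hab (by linear_combination he))
        omega
  · -- r a, sr b
    obtain ⟨i, hi1, hi2, hc⟩ := C2 hn hev a
    refine ⟨r (i : ZMod n), ⟨i, hi1, hi2, Or.inl (r_one_pow i).symm⟩, ?_⟩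
    have d2 : (cayley (Psi n)).dist (sr b) (r (i : ZMod n)) = 1 := dist_sr_r b _
    rcases hc with hc | ⟨h1, h2⟩
    · have d1 : (cayley (Psi n)).dist (r a) (r (i : ZMod n)) = 0 := by
        rw [hc]; exact SimpleGraph.dist_self
      omega
    · have d1 : (cayley (Psi n)).dist (r a) (r (i : ZMod n)) = 2 := dist_rr_two hev h1 h2
      omega
  · -- sr a, r b
    obtain ⟨i, hi1, hi2, hc⟩ := C2 hn hev b
    refine ⟨r (i : ZMod n), ⟨i, hi1, hi2, Or.inl (r_one_pow i).symm⟩, ?_⟩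
    have d1 : (cayley (Psi n)).dist (sr a) (r (i : ZMod n)) = 1 := dist_sr_r a _
    rcases hc with hc | ⟨h1, h2⟩
    · have d2 : (cayley (Psi n)).dist (r b) (r (i : ZMod n)) = 0 := by
        rw [hc]; exact SimpleGraph.dist_self
      omega
    · have d2 : (cayley (Psi n)).dist (r b) (r (i : ZMod n)) = 2 := dist_rr_two hev h1 h2
      omega
  · -- sr a, sr b
    have hab : a ≠ b := by simpa using huv
    obtain ⟨i, hi1, hi2, hc⟩ := C1 hn hev (-a)
    refine ⟨sr (-(i : ZMod n)), ⟨i, hi1, hi2,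
      Or.inr (by rw [r_one_pow, r_mul_sr, zero_sub])⟩, ?_⟩
    have hc' : -(i : ZMod n) = a ∨ -(i : ZMod n) = a + ((n / 2 : ℕ) : ZMod n) := by
      rcases hc with hc | hc
      · left; rw [hc, neg_neg]
      · right; linear_combination -hc - hh
    by_cases hb : b = a + ((n / 2 : ℕ) : ZMod n)
    · rcases hc' with hc' | hc'
      · have d1 : (cayley (Psi n)).dist (sr a) (sr (-(i : ZMod n))) = 0 := by
          rw [hc']; exact SimpleGraph.dist_self
        have d2 : (cayley (Psi n)).dist (sr b) (sr (-(i : ZMod n))) = 1 := by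
          rw [hc', hb, SimpleGraph.dist_comm]; exact dist_srsr_one hn a
        omega
      · have hcb : -(i : ZMod n) = b := by rw [hc', hb]
        have d2 : (cayley (Psi n)).dist (sr b) (sr (-(i : ZMod n))) = 0 := by
          rw [hcb]; exact SimpleGraph.dist_self
        have d1 : (cayley (Psi n)).dist (sr a) (sr (-(i : ZMod n))) = 1 := by
          rw [hcb, hb]; exact dist_srsr_one hn a
        omega
    · rcases hc' with hc' | hc'
      · have d1 : (cayley (Psi n)).dist (sr a) (sr (-(i : ZMod n))) = 0 := by
          rw [hc']; exact SimpleGraph.dist_self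
        have d2 : (cayley (Psi n)).dist (sr b) (sr (-(i : ZMod n))) = 2 := by
          rw [hc']
          exact dist_srsr_two hev hab (fun he => hb (by linear_combination -he - hh))
        omega
      · have d1 : (cayley (Psi n)).dist (sr a) (sr (-(i : ZMod n))) = 1 := by
          rw [hc']; exact dist_srsr_one hn a
        have d2 : (cayley (Psi n)).dist (sr b) (sr (-(i : ZMod n))) = 2 := by
          rw [hc']
          exact dist_srsr_two hev (fun he => hb he.symm)
            (fun he => hab (by linear_combination he))
        omega
end

section
/- Let n ≥ 4 be an even integer and Λ = Cay(D_{2n}, Ψ) with Ψ = {b, ab, ..., a^{n-1}b} ∪ {a^{n/2}}. No set of vertices of cardinality less than n is a resolving set of Λ; hence the metric dimension of Λ equals n. -/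
namespace CayleyAux

open DihedralGroup SimpleGraph

variable {n : ℕ}

/-- abbreviation for the central rotation index -/
noncomputable def c (n : ℕ) : ZMod n := ((n / 2 : ℕ) : ZMod n)

lemma mem_psi_r {k : ZMod n} : DihedralGroup.r k ∈ Psi n ↔ k = c n := by
  simp [Psi, c]

lemma mem_psi_sr (k : ZMod n) : DihedralGroup.sr k ∈ Psi n := by
  simp [Psi]

lemma inv_r (i : ZMod n) : (DihedralGroup.r i)⁻¹ = DihedralGroup.r (-i) := rfl
lemma inv_sr (i : ZMod n) : (DihedralGroup.sr i)⁻¹ = DihedralGroup.sr i := rfl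

section basic
variable (hn : 4 ≤ n) (hev : Even n)
include hn hev

lemma hcval : (c n).val = n / 2 := ZMod.val_cast_of_lt (by omega)

lemma hc0 : c n ≠ 0 := by
  haveI : NeZero n := ⟨by omega⟩
  intro h
  have hv := hcval (n := n) hn hev
  rw [h, ZMod.val_zero] at hv
  omega

lemma hcc : c n + c n = 0 := by
  have : (n : ZMod n) = 0 := ZMod.natCast_self n
  obtain ⟨k, hk⟩ := hev
  have h2 : n / 2 + n / 2 = n := by omega
  calc c n + c n = ((n/2 + n/2 : ℕ) : ZMod n) := by push_cast [c]; ring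
    _ = ((n : ℕ) : ZMod n) := by rw [h2]
    _ = 0 := ZMod.natCast_self n

lemma neg_c : -(c n) = c n := neg_eq_of_add_eq_zero_right (hcc hn hev)

lemma adj_rr {i j : ZMod n} : (cayley (Psi n)).Adj (.r i) (.r j) ↔ j = i + c n := by
  haveI : NeZero n := ⟨by omega⟩
  rw [cayley, SimpleGraph.fromRel_adj]
  rw [inv_r, inv_r, r_mul_r, r_mul_r, mem_psi_r, mem_psi_r]
  constructor
  · rintro ⟨hne, h | h⟩
    · rw [← h]; ring
    · have : i = j + c n := by rw [← h]; ring
      rw [this, add_assoc, hcc hn hev, add_zero]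
  · rintro rfl
    refine ⟨?_, Or.inl (by ring)⟩
    intro h
    have := DihedralGroup.r.inj h
    exact hc0 hn hev (by linear_combination -this)

lemma adj_ss {i j : ZMod n} : (cayley (Psi n)).Adj (.sr i) (.sr j) ↔ j = i + c n := by
  haveI : NeZero n := ⟨by omega⟩
  rw [cayley, SimpleGraph.fromRel_adj]
  rw [inv_sr, inv_sr, sr_mul_sr, sr_mul_sr, mem_psi_r, mem_psi_r]
  constructor
  · rintro ⟨hne, h | h⟩
    · rw [← h]; ring
    · have : i = j + c n := by rw [← h]; ring
      rw [this, add_assoc, hcc hn hev, add_zero]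
  · rintro rfl
    refine ⟨?_, Or.inl (by ring)⟩
    intro h
    have := DihedralGroup.sr.inj h
    exact hc0 hn hev (by linear_combination -this)

end basic

lemma adj_rs (i j : ZMod n) : (cayley (Psi n)).Adj (.r i) (.sr j) := by
  rw [cayley, SimpleGraph.fromRel_adj]
  exact ⟨by simp, Or.inl (by rw [inv_r, r_mul_sr]; exact mem_psi_sr _)⟩

lemma adj_sr (i j : ZMod n) : (cayley (Psi n)).Adj (.sr i) (.r j) :=
  (adj_rs j i).symm

lemma dist_rs (i j : ZMod n) : (cayley (Psi n)).dist (.r i) (.sr j) = 1 :=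
  SimpleGraph.dist_eq_one_iff_adj.mpr (adj_rs i j)

lemma dist_sr (i j : ZMod n) : (cayley (Psi n)).dist (.sr i) (.r j) = 1 :=
  SimpleGraph.dist_eq_one_iff_adj.mpr (adj_sr i j)

section dists
variable (hn : 4 ≤ n) (hev : Even n)
include hn hev

lemma dist_rr_one {i j : ZMod n} (h : j = i + c n) :
    (cayley (Psi n)).dist (.r i) (.r j) = 1 :=
  SimpleGraph.dist_eq_one_iff_adj.mpr ((adj_rr hn hev).mpr h)

lemma dist_ss_one {i j : ZMod n} (h : j = i + c n) :
    (cayley (Psi n)).dist (.sr i) (.sr j) = 1 :=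
  SimpleGraph.dist_eq_one_iff_adj.mpr ((adj_ss hn hev).mpr h)

lemma dist_rr_two {i j : ZMod n} (hne : i ≠ j) (h : j ≠ i + c n) :
    (cayley (Psi n)).dist (.r i) (.r j) = 2 := by
  have hle : (cayley (Psi n)).dist (.r i) (.r j) ≤ 2 := by
    simpa using SimpleGraph.dist_le
      (SimpleGraph.Walk.cons (adj_rs i 0) (.cons (adj_sr 0 j) .nil))
  have h0 : (cayley (Psi n)).dist (.r i) (.r j) ≠ 0 := by
    intro h0
    rcases SimpleGraph.dist_eq_zero_iff_eq_or_not_reachable.mp h0 with h' | h'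
    · exact hne (DihedralGroup.r.inj h')
    · exact h' ⟨SimpleGraph.Walk.cons (adj_rs i 0) (.cons (adj_sr 0 j) .nil)⟩
  have h1 : (cayley (Psi n)).dist (.r i) (.r j) ≠ 1 := by
    intro h1
    exact h ((adj_rr hn hev).mp (SimpleGraph.dist_eq_one_iff_adj.mp h1))
  omega

lemma dist_ss_two {i j : ZMod n} (hne : i ≠ j) (h : j ≠ i + c n) :
    (cayley (Psi n)).dist (.sr i) (.sr j) = 2 := by
  have hle : (cayley (Psi n)).dist (.sr i) (.sr j) ≤ 2 := by
    exact le_of_le_of_eq (SimpleGraph.dist_le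
      (SimpleGraph.Walk.cons (adj_sr i 0) (.cons (adj_rs 0 j) .nil))) rfl
  have h0 : (cayley (Psi n)).dist (.sr i) (.sr j) ≠ 0 := by
    intro h0
    rcases SimpleGraph.dist_eq_zero_iff_eq_or_not_reachable.mp h0 with h' | h'
    · exact hne (DihedralGroup.sr.inj h')
    · exact h' ⟨SimpleGraph.Walk.cons (adj_sr i 0) (.cons (adj_rs 0 j) .nil)⟩
  have h1 : (cayley (Psi n)).dist (.sr i) (.sr j) ≠ 1 := by
    intro h1
    exact h ((adj_ss hn hev).mp (SimpleGraph.dist_eq_one_iff_adj.mp h1))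
  omega

-- arithmetic facts
lemma one_ne_zero' : (1 : ZMod n) ≠ 0 := by
  haveI : NeZero n := ⟨by omega⟩
  intro h
  have := congrArg ZMod.val h
  rw [ZMod.val_one_eq_one_mod, Nat.mod_eq_of_lt (by omega), ZMod.val_zero] at this
  omega

lemma one_ne_c : (1 : ZMod n) ≠ c n := by
  haveI : NeZero n := ⟨by omega⟩
  intro h
  have := congrArg ZMod.val h
  rw [ZMod.val_one_eq_one_mod, Nat.mod_eq_of_lt (by omega), hcval hn hev] at this
  omega

lemma one_add_c_ne_zero : 1 + c n ≠ 0 := by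
  haveI : NeZero n := ⟨by omega⟩
  intro h
  have h1 : ((1 + n / 2 : ℕ) : ZMod n) = 1 + c n := by push_cast [c]; ring
  rw [← h1] at h
  have := (ZMod.natCast_eq_zero_iff _ n).mp h
  have := Nat.le_of_dvd (by omega) this
  omega

/-- Every resolving set must contain a representative of each antipodal pair. -/
lemma rep_of_resolving {R : Set (DihedralGroup n)}
    (hres : IsResolvingSet (cayley (Psi n)) R) :
    (∀ i : ZMod n, DihedralGroup.r i ∈ R ∨ DihedralGroup.r (i + c n) ∈ R) ∧
    (∀ i : ZMod n, DihedralGroup.sr i ∈ R ∨ DihedralGroup.sr (i + c n) ∈ R) := by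
  have hc := hc0 hn hev
  have hcc := hcc hn hev
  constructor
  · intro i
    have hne : DihedralGroup.r i ≠ DihedralGroup.r (i + c n) := by
      intro h
      exact hc (by linear_combination - DihedralGroup.r.inj h)
    obtain ⟨w, hwR, hw⟩ := hres _ _ hne
    rcases w with k | k
    · -- w = r k : must be one of the two
      by_cases h1 : k = i
      · subst h1; exact Or.inl hwR
      by_cases h2 : k = i + c n
      · subst h2; exact Or.inr hwR
      · exfalso
        have harg : k ≠ i + c n + c n := by
          rw [add_assoc, hcc, add_zero]; exact h1
        exact hw ((dist_rr_two hn hev (fun h => h1 h.symm) h2).trans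
          (dist_rr_two hn hev (fun h => h2 h.symm) harg).symm)
    · exact absurd (by rw [dist_rs, dist_rs]) hw
  · intro i
    have hne : DihedralGroup.sr i ≠ DihedralGroup.sr (i + c n) := by
      intro h
      exact hc (by linear_combination - DihedralGroup.sr.inj h)
    obtain ⟨w, hwR, hw⟩ := hres _ _ hne
    rcases w with k | k
    · exact absurd (by rw [dist_sr, dist_sr]) hw
    · by_cases h1 : k = i
      · subst h1; exact Or.inl hwR
      by_cases h2 : k = i + c n
      · subst h2; exact Or.inr hwR
      · exfalso
        have harg : k ≠ i + c n + c n := by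
          rw [add_assoc, hcc, add_zero]; exact h1
        exact hw ((dist_ss_two hn hev (fun h => h1 h.symm) h2).trans
          (dist_ss_two hn hev (fun h => h2 h.symm) harg).symm)

/-- A set containing a representative of each antipodal pair is resolving. -/
lemma resolving_of_rep {R : Set (DihedralGroup n)}
    (hr : ∀ i : ZMod n, DihedralGroup.r i ∈ R ∨ DihedralGroup.r (i + c n) ∈ R)
    (hs : ∀ i : ZMod n, DihedralGroup.sr i ∈ R ∨ DihedralGroup.sr (i + c n) ∈ R) :
    IsResolvingSet (cayley (Psi n)) R := by
  have hc := hc0 hn hev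
  have hcc := hcc hn hev
  have h1 := one_ne_zero' (n := n) hn hev
  have h1c := one_ne_c hn hev
  have h1c0 := one_add_c_ne_zero hn hev
  intro u v huv
  rcases u with i | i <;> rcases v with j | j
  · -- r i vs r j
    have hij : i ≠ j := fun h => huv (by rw [h])
    rcases hr i with h | h
    · refine ⟨_, h, ?_⟩
      rw [SimpleGraph.dist_self]
      by_cases hji : i = j + c n
      · rw [dist_rr_one hn hev hji]; omega
      · rw [dist_rr_two hn hev (Ne.symm hij) hji]; omega
    · refine ⟨_, h, ?_⟩
      rw [dist_rr_one hn hev rfl]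
      by_cases hji : j = i + c n
      · rw [← hji, SimpleGraph.dist_self]; omega
      · rw [dist_rr_two hn hev hji (by
          intro h'
          exact hij (by linear_combination h'))]
        omega
  · -- r i vs sr j : use r-pair at i+1
    rcases hr (i + 1) with h | h
    · refine ⟨_, h, ?_⟩
      rw [dist_rr_two hn hev (by intro h'; exact h1 (by linear_combination -h'))
          (by intro h'; exact h1c (by linear_combination h')),
          dist_sr]
      omega
    · refine ⟨_, h, ?_⟩
      rw [dist_rr_two hn hev
          (by intro h'; exact h1c0 (by linear_combination -h'))
          (by intro h'; exact h1 (by linear_combination h')),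
          dist_sr]
      omega
  · -- sr i vs r j : use r-pair at j+1
    rcases hr (j + 1) with h | h
    · refine ⟨_, h, ?_⟩
      rw [dist_sr,
          dist_rr_two hn hev (by intro h'; exact h1 (by linear_combination -h'))
          (by intro h'; exact h1c (by linear_combination h'))]
      omega
    · refine ⟨_, h, ?_⟩
      rw [dist_sr,
          dist_rr_two hn hev
          (by intro h'; exact h1c0 (by linear_combination -h'))
          (by intro h'; exact h1 (by linear_combination h'))]
      omega
  · -- sr i vs sr j
    have hij : i ≠ j := fun h => huv (by rw [h])
    rcases hs i with h | h
    · refine ⟨_, h, ?_⟩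
      rw [SimpleGraph.dist_self]
      by_cases hji : i = j + c n
      · rw [dist_ss_one hn hev hji]; omega
      · rw [dist_ss_two hn hev (Ne.symm hij) hji]; omega
    · refine ⟨_, h, ?_⟩
      rw [dist_ss_one hn hev rfl]
      by_cases hji : j = i + c n
      · rw [← hji, SimpleGraph.dist_self]; omega
      · rw [dist_ss_two hn hev hji (by
          intro h'
          exact hij (by linear_combination h'))]
        omega

end dists

end CayleyAux

theorem cayley_metric_dimension (n : ℕ) (hn : 4 ≤ n) (hev : Even n) :
    (∀ R : Set (DihedralGroup n), R.ncard < n → ¬ IsResolvingSet (cayley (Psi n)) R) ∧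
    IsLeast {m : ℕ | ∃ R : Set (DihedralGroup n),
      R.ncard = m ∧ IsResolvingSet (cayley (Psi n)) R} n := by
  haveI : NeZero n := ⟨by omega⟩
  obtain ⟨k, hk⟩ := hev
  have hev' : Even n := ⟨k, hk⟩
  -- Part 1 : lower bound
  have key : ∀ R : Set (DihedralGroup n), R.ncard < n →
      ¬ IsResolvingSet (cayley (Psi n)) R := by
    intro R hR hres
    obtain ⟨hr, hs⟩ := CayleyAux.rep_of_resolving hn hev' hres
    set σ : DihedralGroup n → DihedralGroup n :=
      fun x => x * DihedralGroup.r (CayleyAux.c n) with hσ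
    have hsub : (Set.univ : Set (DihedralGroup n)) ⊆ R ∪ σ '' R := by
      rintro (i | i) -
      · rcases hr i with h | h
        · exact Or.inl h
        · refine Or.inr ⟨_, h, ?_⟩
          show DihedralGroup.r (i + CayleyAux.c n) * DihedralGroup.r (CayleyAux.c n)
              = DihedralGroup.r i
          rw [DihedralGroup.r_mul_r, add_assoc, CayleyAux.hcc hn hev', add_zero]
      · rcases hs i with h | h
        · exact Or.inl h
        · refine Or.inr ⟨_, h, ?_⟩
          show DihedralGroup.sr (i + CayleyAux.c n) * DihedralGroup.r (CayleyAux.c n)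
              = DihedralGroup.sr i
          rw [DihedralGroup.sr_mul_r, add_assoc, CayleyAux.hcc hn hev', add_zero]
    have hinjσ : Function.Injective σ := fun a b h => by
      simpa [hσ] using congrArg (fun y => y * (DihedralGroup.r (CayleyAux.c n))⁻¹) h
    have h1 : (Set.univ : Set (DihedralGroup n)).ncard = 2 * n := by
      rw [Set.ncard_univ, DihedralGroup.nat_card]
    have h2 : (σ '' R).ncard = R.ncard := Set.ncard_image_of_injective R hinjσ
    have h3 := Set.ncard_le_ncard hsub (Set.toFinite _)
    have h4 := Set.ncard_union_le R (σ '' R)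
    omega
  refine ⟨key, ?_, ?_⟩
  · -- n is attained
    set S : Set (ZMod n) := {i : ZMod n | i.val < n / 2} with hSdef
    refine ⟨DihedralGroup.r '' S ∪ DihedralGroup.sr '' S, ?_, ?_⟩
    · -- cardinality
      have hinj : Function.Injective (fun m : Fin (n / 2) => ((m : ℕ) : ZMod n)) := by
        intro a b h
        have := congrArg ZMod.val h
        rw [ZMod.val_cast_of_lt (by omega), ZMod.val_cast_of_lt (by omega)] at this
        exact Fin.ext this
      have hS : S = (fun m : Fin (n / 2) => ((m : ℕ) : ZMod n)) '' Set.univ := by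
        ext i
        simp only [hSdef, Set.mem_setOf_eq, Set.image_univ, Set.mem_range]
        constructor
        · intro h
          exact ⟨⟨i.val, h⟩, ZMod.natCast_rightInverse i⟩
        · rintro ⟨m, rfl⟩
          rw [ZMod.val_cast_of_lt (by omega)]
          exact m.2
      have hSn : S.ncard = n / 2 := by
        rw [hS, Set.ncard_image_of_injective _ hinj, Set.ncard_univ,
          Nat.card_eq_fintype_card, Fintype.card_fin]
      have hrinj : Function.Injective (DihedralGroup.r (n := n)) :=
        fun a b h => DihedralGroup.r.inj h
      have hsrinj : Function.Injective (DihedralGroup.sr (n := n)) :=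
        fun a b h => DihedralGroup.sr.inj h
      have hdisj : Disjoint (DihedralGroup.r '' S) (DihedralGroup.sr '' S) := by
        rw [Set.disjoint_left]
        rintro x ⟨a, -, rfl⟩ ⟨b, -, hb⟩
        exact absurd hb (by simp)
      rw [Set.ncard_union_eq hdisj (Set.toFinite _) (Set.toFinite _),
        Set.ncard_image_of_injective _ hrinj, Set.ncard_image_of_injective _ hsrinj, hSn]
      omega
    · -- resolving
      apply CayleyAux.resolving_of_rep hn hev'
      · intro i
        by_cases h : i.val < n / 2
        · exact Or.inl (Set.mem_union_left _ ⟨i, h, rfl⟩)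
        · refine Or.inr (Set.mem_union_left _ ⟨i + CayleyAux.c n, ?_, rfl⟩)
          show (i + CayleyAux.c n).val < n / 2
          have hva : (i + CayleyAux.c n).val = (i.val + (CayleyAux.c n).val) % n :=
            ZMod.val_add _ _
          rw [CayleyAux.hcval hn hev'] at hva
          have hlt : i.val < n := ZMod.val_lt i
          rw [Nat.mod_eq_sub_mod (by omega), Nat.mod_eq_of_lt (by omega)] at hva
          omega
      · intro i
        by_cases h : i.val < n / 2
        · exact Or.inl (Set.mem_union_right _ ⟨i, h, rfl⟩)
        · refine Or.inr (Set.mem_union_right _ ⟨i + CayleyAux.c n, ?_, rfl⟩)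
          show (i + CayleyAux.c n).val < n / 2
          have hva : (i + CayleyAux.c n).val = (i.val + (CayleyAux.c n).val) % n :=
            ZMod.val_add _ _
          rw [CayleyAux.hcval hn hev'] at hva
          have hlt : i.val < n := ZMod.val_lt i
          rw [Nat.mod_eq_sub_mod (by omega), Nat.mod_eq_of_lt (by omega)] at hva
          omega
  · -- n is a lower bound
    rintro m ⟨R, hcard, hres⟩
    by_contra hlt
    exact key R (by omega) hres
end

section
/- Let n ≥ 4 be an even integer and Λ = Cay(D_{2n}, Ψ) with Ψ = {b, ab, ..., a^{n-1}b} ∪ {a^{n/2}}. The set R = {a, a^2, ..., a^{n/2}} ∪ {ab, a^2b, ..., a^{n/2}b} is a doubly resolving set of Λ. -/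
/-- `S` is a doubly resolving set of `G`. -/
def IsDoublyResolvingSet {V : Type*} (G : SimpleGraph V) (S : Set V) : Prop :=
  ∀ u v : V, u ≠ v → ∃ x ∈ S, ∃ y ∈ S,
    (G.dist u x : ℤ) - (G.dist u y : ℤ) ≠ (G.dist v x : ℤ) - (G.dist v y : ℤ)

namespace CayleyDRS

open DihedralGroup SimpleGraph

/-- The distance-from-identity function on the dihedral Cayley graph. -/
def D (n : ℕ) : DihedralGroup n → ℕ
  | DihedralGroup.r i => if i = 0 then 0 else if i = ((n / 2 : ℕ) : ZMod n) then 1 else 2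
  | DihedralGroup.sr _ => 1

variable {n : ℕ}

theorem D_sr (i : ZMod n) : D n (sr i) = 1 := rfl

theorem D_r (i : ZMod n) :
    D n (r i) = if i = 0 then 0 else if i = ((n / 2 : ℕ) : ZMod n) then 1 else 2 := rfl

theorem inv_r (i : ZMod n) : (r i)⁻¹ = r (-i) := by
  apply inv_eq_of_mul_eq_one_right
  rw [r_mul_r, add_neg_cancel, one_def]

theorem inv_sr (i : ZMod n) : (sr i)⁻¹ = sr i :=
  inv_eq_of_mul_eq_one_right (sr_mul_self i)

theorem half_add_half (hev : Even n) :
    ((n / 2 : ℕ) : ZMod n) + ((n / 2 : ℕ) : ZMod n) = 0 := by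
  rw [← Nat.cast_add]
  have h : n / 2 + n / 2 = n := by
    rw [Nat.even_iff] at hev; omega
  rw [h, ZMod.natCast_self]

theorem neg_half (hev : Even n) : -((n / 2 : ℕ) : ZMod n) = ((n / 2 : ℕ) : ZMod n) :=
  neg_eq_of_add_eq_zero_left (half_add_half hev)

theorem half_ne_zero (hn : 4 ≤ n) : ((n / 2 : ℕ) : ZMod n) ≠ 0 := by
  haveI : NeZero n := ⟨by omega⟩
  intro h
  rw [ZMod.natCast_eq_zero_iff] at h
  have := Nat.le_of_dvd (by omega) h
  omega

theorem sr_mem_psi (i : ZMod n) : sr i ∈ Psi n := Or.inl ⟨i, rfl⟩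

theorem r_mem_psi_iff (i : ZMod n) : r i ∈ Psi n ↔ i = ((n / 2 : ℕ) : ZMod n) := by
  unfold Psi
  simp

theorem psi_inv (hev : Even n) {x : DihedralGroup n} (hx : x ∈ Psi n) : x⁻¹ ∈ Psi n := by
  rcases hx with ⟨i, rfl⟩ | hx
  · rw [inv_sr]; exact sr_mem_psi i
  · simp only [Set.mem_singleton_iff] at hx
    subst hx
    rw [inv_r, neg_half hev]
    exact Or.inr rfl

theorem adj_iff (hev : Even n) {x y : DihedralGroup n} :
    (cayley (Psi n)).Adj x y ↔ x ≠ y ∧ x⁻¹ * y ∈ Psi n := by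
  unfold cayley
  rw [SimpleGraph.fromRel_adj]
  constructor
  · rintro ⟨hne, h | h⟩
    · exact ⟨hne, h⟩
    · refine ⟨hne, ?_⟩
      have hxy : x⁻¹ * y = (y⁻¹ * x)⁻¹ := by group
      rw [hxy]
      exact psi_inv hev h
  · rintro ⟨hne, h⟩
    exact ⟨hne, Or.inl h⟩

theorem dist_eq (hn : 4 ≤ n) (hev : Even n) (u v : DihedralGroup n) :
    (cayley (Psi n)).dist u v = D n (u⁻¹ * v) := by
  have key : ∀ w : DihedralGroup n, (cayley (Psi n)).dist u (u * w) = D n w := by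
    intro w
    match w with
    | DihedralGroup.sr i =>
      have hne : u ≠ u * sr i := by
        intro h
        have h1 : (1 : DihedralGroup n) = sr i :=
          mul_left_cancel (a := u) (by rw [mul_one, ← h])
        rw [one_def] at h1
        cases h1
      have hadj : (cayley (Psi n)).Adj u (u * sr i) := by
        rw [adj_iff hev]
        refine ⟨hne, ?_⟩
        rw [inv_mul_cancel_left]
        exact sr_mem_psi i
      rw [SimpleGraph.dist_eq_one_iff_adj.mpr hadj, D_sr]
    | DihedralGroup.r i =>
      by_cases hi0 : i = 0
      · subst hi0
        have h1 : u * r (0 : ZMod n) = u := by rw [← one_def, mul_one]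
        rw [h1, SimpleGraph.dist_self, D_r, if_pos rfl]
      · have hne : u ≠ u * r i := by
          intro h
          have : (1 : DihedralGroup n) = r i :=
            mul_left_cancel (a := u) (by rw [mul_one, ← h])
          rw [one_def] at this
          exact hi0 (DihedralGroup.r.injEq 0 i ▸ this).symm
        by_cases hih : i = ((n / 2 : ℕ) : ZMod n)
        · have hadj : (cayley (Psi n)).Adj u (u * r i) := by
            rw [adj_iff hev]
            refine ⟨hne, ?_⟩
            rw [inv_mul_cancel_left, r_mem_psi_iff]
            exact hih
          rw [SimpleGraph.dist_eq_one_iff_adj.mpr hadj, D_r, if_neg hi0, if_pos hih]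
        · -- distance 2
          have h1 : (cayley (Psi n)).Adj u (u * sr 0) := by
            rw [adj_iff hev]
            constructor
            · intro h
              have h1 : (1 : DihedralGroup n) = sr 0 :=
                mul_left_cancel (a := u) (by rw [mul_one, ← h])
              rw [one_def] at h1
              cases h1
            · rw [inv_mul_cancel_left]; exact sr_mem_psi 0
          have h2 : (cayley (Psi n)).Adj (u * sr 0) (u * r i) := by
            rw [adj_iff hev]
            constructor
            · intro h
              have h1 : (sr 0 : DihedralGroup n) = r i := mul_left_cancel (a := u) h
              simp at h1
            · have hv : (u * sr 0)⁻¹ * (u * r i) = sr (0 + i) := by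
                rw [mul_inv_rev, inv_sr, mul_assoc, inv_mul_cancel_left, sr_mul_r]
              rw [hv]
              exact sr_mem_psi _
          have hle : (cayley (Psi n)).dist u (u * r i) ≤ 2 := by
            simpa using SimpleGraph.dist_le
              (SimpleGraph.Walk.cons h1 (SimpleGraph.Walk.cons h2 SimpleGraph.Walk.nil))
          have hreach : (cayley (Psi n)).Reachable u (u * r i) :=
            ⟨SimpleGraph.Walk.cons h1 (SimpleGraph.Walk.cons h2 SimpleGraph.Walk.nil)⟩
          have hd0 : (cayley (Psi n)).dist u (u * r i) ≠ 0 := fun h =>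
            hne (hreach.dist_eq_zero_iff.mp h)
          have hd1 : (cayley (Psi n)).dist u (u * r i) ≠ 1 := by
            intro h
            have hadj := SimpleGraph.dist_eq_one_iff_adj.mp h
            rw [adj_iff hev, inv_mul_cancel_left, r_mem_psi_iff] at hadj
            exact hih hadj.2
          rw [D_r, if_neg hi0, if_neg hih]
          omega
  have hv : v = u * (u⁻¹ * v) := by group
  conv_lhs => rw [hv]
  exact key _

/-- For every `a`, some `k ∈ [1, n/2]` satisfies `k ≡ a` or `k ≡ a + n/2`. -/
theorem exists_k (hn : 4 ≤ n) (hev : Even n) (a : ZMod n) :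
    ∃ k : ℕ, 1 ≤ k ∧ k ≤ n / 2 ∧
      ((k : ZMod n) = a ∨ (k : ZMod n) = a + ((n / 2 : ℕ) : ZMod n)) := by
  haveI : NeZero n := ⟨by omega⟩
  have hval : a.val < n := ZMod.val_lt a
  have hcast : ((a.val : ℕ) : ZMod n) = a := ZMod.natCast_rightInverse a
  have heven : n / 2 + n / 2 = n := by rw [Nat.even_iff] at hev; omega
  by_cases h1 : 1 ≤ a.val ∧ a.val ≤ n / 2
  · exact ⟨a.val, h1.1, h1.2, Or.inl hcast⟩
  · by_cases h0 : a.val = 0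
    · have ha : a = 0 := by
        rw [← hcast, h0, Nat.cast_zero]
      refine ⟨n / 2, by omega, le_refl _, Or.inr ?_⟩
      rw [ha, zero_add]
    · -- a.val > n / 2
      have hgt : n / 2 < a.val := by omega
      refine ⟨a.val - n / 2, by omega, by omega, Or.inr ?_⟩
      rw [Nat.cast_sub (le_of_lt hgt), hcast]
      linear_combination -(half_add_half hev)

theorem cast_k_inj (hn : 4 ≤ n) {k k' : ℕ} (hk1 : 1 ≤ k) (hk2 : k ≤ n / 2)
    (hk1' : 1 ≤ k') (hk2' : k' ≤ n / 2) (h : (k : ZMod n) = (k' : ZMod n)) : k = k' := by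
  haveI : NeZero n := ⟨by omega⟩
  have := congrArg ZMod.val h
  rwa [ZMod.val_cast_of_lt (by omega), ZMod.val_cast_of_lt (by omega)] at this

theorem not_shift (hn : 4 ≤ n) (hev : Even n) {k k' : ℕ} (hk1 : 1 ≤ k) (hk2 : k ≤ n / 2)
    (hk1' : 1 ≤ k') (hk2' : k' ≤ n / 2) :
    (k' : ZMod n) ≠ (k : ZMod n) + ((n / 2 : ℕ) : ZMod n) := by
  haveI : NeZero n := ⟨by omega⟩
  have heven : n / 2 + n / 2 = n := by rw [Nat.even_iff] at hev; omega
  intro h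
  rw [← Nat.cast_add] at h
  rcases Nat.lt_or_ge (k + n / 2) n with hlt | hge
  · have := congrArg ZMod.val h
    rw [ZMod.val_cast_of_lt (by omega), ZMod.val_cast_of_lt hlt] at this
    omega
  · have hkn : k + n / 2 = n := by omega
    rw [hkn, ZMod.natCast_self] at h
    have := congrArg ZMod.val h
    rw [ZMod.val_cast_of_lt (by omega), ZMod.val_zero] at this
    omega

theorem D_r_of_ne (hz : z ≠ 0) (hh : z ≠ ((n / 2 : ℕ) : ZMod n)) : D n (r z) = 2 := by
  rw [D_r, if_neg hz, if_neg hh]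

theorem D_r_zero : D n (r (0 : ZMod n)) = 0 := by rw [D_r, if_pos rfl]

theorem D_r_half (hn : 4 ≤ n) : D n (r ((n / 2 : ℕ) : ZMod n)) = 1 := by
  rw [D_r, if_neg (half_ne_zero hn), if_pos rfl]

theorem D_ne (hn : 4 ≤ n) {z w : ZMod n} (hzw : z ≠ w)
    (hz : z = 0 ∨ z = ((n / 2 : ℕ) : ZMod n)) : D n (r z) ≠ D n (r w) := by
  rcases hz with rfl | rfl
  · rw [D_r_zero]
    by_cases hw : w = ((n / 2 : ℕ) : ZMod n)
    · rw [hw, D_r_half hn]; omega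
    · rw [D_r_of_ne (Ne.symm hzw) hw]; omega
  · rw [D_r_half hn]
    by_cases hw : w = 0
    · rw [hw, D_r_zero]; omega
    · rw [D_r_of_ne hw (Ne.symm hzw)]; omega

/-- The resolving set. -/
def R (n : ℕ) : Set (DihedralGroup n) :=
  {x : DihedralGroup n | ∃ i : ℕ, 1 ≤ i ∧ i ≤ n / 2 ∧
    (x = (DihedralGroup.r 1) ^ i ∨ x = (DihedralGroup.r 1) ^ i * DihedralGroup.sr 0)}

theorem mem_rot {k : ℕ} (h1 : 1 ≤ k) (h2 : k ≤ n / 2) : (r 1 : DihedralGroup n) ^ k ∈ R n :=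
  ⟨k, h1, h2, Or.inl rfl⟩

theorem mem_refl {j : ℕ} (h1 : 1 ≤ j) (h2 : j ≤ n / 2) :
    (r 1 : DihedralGroup n) ^ j * sr 0 ∈ R n :=
  ⟨j, h1, h2, Or.inr rfl⟩

theorem val_rot_rot (a : ZMod n) (k : ℕ) :
    (r a)⁻¹ * ((r 1 : DihedralGroup n) ^ k) = r ((k : ZMod n) - a) := by
  rw [r_one_pow, inv_r, r_mul_r]
  congr 1
  ring

theorem val_rot_refl (a : ZMod n) (j : ℕ) :
    (r a)⁻¹ * ((r 1 : DihedralGroup n) ^ j * sr 0) = sr (a - (j : ZMod n)) := by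
  rw [r_one_pow, inv_r, ← mul_assoc, r_mul_r, r_mul_sr]
  congr 1
  ring

theorem val_refl_rot (c : ZMod n) (k : ℕ) :
    (sr c)⁻¹ * ((r 1 : DihedralGroup n) ^ k) = sr (c + (k : ZMod n)) := by
  rw [r_one_pow, inv_sr, sr_mul_r]

theorem val_refl_refl (c : ZMod n) (j : ℕ) :
    (sr c)⁻¹ * ((r 1 : DihedralGroup n) ^ j * sr 0) = r (-(j : ZMod n) - c) := by
  rw [r_one_pow, inv_sr, ← mul_assoc, sr_mul_r, sr_mul_sr]
  congr 1
  ring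

/-- Core lemma for the rotation/rotation case. -/
theorem key_rot_rot (hn : 4 ≤ n) (hev : Even n) {a c : ZMod n} (hac : a ≠ c) :
    ∃ x ∈ R n, ∃ y ∈ R n,
      (D n ((r a)⁻¹ * x) : ℤ) - (D n ((r a)⁻¹ * y) : ℤ) ≠
        (D n ((r c)⁻¹ * x) : ℤ) - (D n ((r c)⁻¹ * y) : ℤ) := by
  obtain ⟨k, hk1, hk2, hk⟩ := exists_k hn hev a
  have hm2 : 2 ≤ n / 2 := by omega
  refine ⟨(r 1) ^ k, mem_rot hk1 hk2, (r 1) ^ 1 * sr 0, mem_refl le_rfl (by omega), ?_⟩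
  rw [val_rot_rot, val_rot_rot, val_rot_refl, val_rot_refl, D_sr, D_sr]
  have hne : D n (r ((k : ZMod n) - a)) ≠ D n (r ((k : ZMod n) - c)) := by
    apply D_ne hn
    · intro h
      exact hac (by linear_combination -h)
    · rcases hk with h | h
      · left; linear_combination h
      · right; linear_combination h
  omega

/-- Core lemma for the reflection/reflection case. -/
theorem key_refl_refl (hn : 4 ≤ n) (hev : Even n) {a c : ZMod n} (hac : a ≠ c) :
    ∃ x ∈ R n, ∃ y ∈ R n,
      (D n ((sr a)⁻¹ * x) : ℤ) - (D n ((sr a)⁻¹ * y) : ℤ) ≠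
        (D n ((sr c)⁻¹ * x) : ℤ) - (D n ((sr c)⁻¹ * y) : ℤ) := by
  obtain ⟨j, hj1, hj2, hj⟩ := exists_k hn hev (-a)
  have hm2 : 2 ≤ n / 2 := by omega
  refine ⟨(r 1) ^ j * sr 0, mem_refl hj1 hj2, (r 1) ^ 1, mem_rot le_rfl (by omega), ?_⟩
  rw [val_refl_refl, val_refl_refl, val_refl_rot, val_refl_rot, D_sr, D_sr]
  have hne : D n (r (-(j : ZMod n) - a)) ≠ D n (r (-(j : ZMod n) - c)) := by
    apply D_ne hn
    · intro h
      exact hac (by linear_combination -h)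
    · rcases hj with h | h
      · left; linear_combination -h
      · right; linear_combination -h - half_add_half hev
  omega

/-- Core lemma for the rotation/reflection case. -/
theorem key_rot_refl (hn : 4 ≤ n) (hev : Even n) (a c : ZMod n) :
    ∃ x ∈ R n, ∃ y ∈ R n,
      (D n ((r a)⁻¹ * x) : ℤ) - (D n ((r a)⁻¹ * y) : ℤ) ≠
        (D n ((sr c)⁻¹ * x) : ℤ) - (D n ((sr c)⁻¹ * y) : ℤ) := by
  have hm2 : 2 ≤ n / 2 := by omega
  obtain ⟨k, hk1, hk2, hk⟩ := exists_k hn hev a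
  obtain ⟨j, hj1, hj2, hj⟩ := exists_k hn hev (-c)
  rcases hk with hkl | hkr
  · -- D n ((r a)⁻¹ * r^k) = 0
    refine ⟨(r 1) ^ k, mem_rot hk1 hk2, (r 1) ^ j * sr 0, mem_refl hj1 hj2, ?_⟩
    rw [val_rot_rot, val_rot_refl, val_refl_rot, val_refl_refl, D_sr, D_sr]
    have h0 : D n (r ((k : ZMod n) - a)) = 0 := by
      rw [show (k : ZMod n) - a = 0 from by linear_combination hkl, D_r_zero]
    have h1 : D n (r (-(j : ZMod n) - c)) ≤ 1 := by
      rcases hj with h | h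
      · rw [show -(j : ZMod n) - c = 0 from by linear_combination -h, D_r_zero]; omega
      · rw [show -(j : ZMod n) - c = ((n / 2 : ℕ) : ZMod n) from by
          linear_combination -h - half_add_half hev, D_r_half hn]
    rw [h0]
    omega
  · -- k ≡ a + n/2, so D n ((r a)⁻¹ * r^k) = 1
    have hka : (k : ZMod n) - a = ((n / 2 : ℕ) : ZMod n) := by linear_combination hkr
    have h1 : D n (r ((k : ZMod n) - a)) = 1 := by rw [hka, D_r_half hn]
    rcases hj with hjl | hjr
    · -- D n ((sr c)⁻¹ * sr(-j)) = 0
      refine ⟨(r 1) ^ j * sr 0, mem_refl hj1 hj2, (r 1) ^ k, mem_rot hk1 hk2, ?_⟩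
      rw [val_rot_refl, val_rot_rot, val_refl_refl, val_refl_rot, D_sr, D_sr]
      have h0 : D n (r (-(j : ZMod n) - c)) = 0 := by
        rw [show -(j : ZMod n) - c = 0 from by linear_combination -hjl, D_r_zero]
      rw [h0, h1]
      omega
    · -- both give 1; use a second rotation
      set k' : ℕ := if k = 1 then 2 else 1 with hk'def
      have hk'1 : 1 ≤ k' := by rw [hk'def]; split <;> omega
      have hk'2 : k' ≤ n / 2 := by rw [hk'def]; split <;> omega
      have hkk' : k' ≠ k := by rw [hk'def]; split <;> omega
      refine ⟨(r 1) ^ k', mem_rot hk'1 hk'2, (r 1) ^ k, mem_rot hk1 hk2, ?_⟩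
      rw [val_rot_rot, val_rot_rot, val_refl_rot, val_refl_rot, D_sr, D_sr]
      have h2 : D n (r ((k' : ZMod n) - a)) = 2 := by
        apply D_r_of_ne
        · intro h
          exact not_shift hn hev hk1 hk2 hk'1 hk'2
            (by linear_combination h - hkr - half_add_half hev)
        · intro h
          exact hkk' (cast_k_inj hn hk'1 hk'2 hk1 hk2 (by linear_combination h - hkr))
      rw [h1, h2]
      omega

theorem key (hn : 4 ≤ n) (hev : Even n) (u v : DihedralGroup n) (huv : u ≠ v) :
    ∃ x ∈ R n, ∃ y ∈ R n,
      (D n (u⁻¹ * x) : ℤ) - (D n (u⁻¹ * y) : ℤ) ≠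
        (D n (v⁻¹ * x) : ℤ) - (D n (v⁻¹ * y) : ℤ) := by
  cases u with
  | r a =>
    cases v with
    | r c =>
      have hac : a ≠ c := fun h => huv (by rw [h])
      exact key_rot_rot hn hev hac
    | sr c => exact key_rot_refl hn hev a c
  | sr a =>
    cases v with
    | r c =>
      obtain ⟨x, hx, y, hy, hne⟩ := key_rot_refl hn hev c a
      exact ⟨x, hx, y, hy, hne.symm⟩
    | sr c =>
      have hac : a ≠ c := fun h => huv (by rw [h])
      exact key_refl_refl hn hev hac

end CayleyDRS

theorem cayley_doubly_resolving_set (n : ℕ) (hn : 4 ≤ n) (hev : Even n) :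
    IsDoublyResolvingSet (cayley (Psi n))
      {x : DihedralGroup n | ∃ i : ℕ, 1 ≤ i ∧ i ≤ n / 2 ∧
        (x = (DihedralGroup.r 1) ^ i ∨ x = (DihedralGroup.r 1) ^ i * DihedralGroup.sr 0)} := by
  intro u v huv
  obtain ⟨x, hx, y, hy, hne⟩ := CayleyDRS.key hn hev u v huv
  refine ⟨x, hx, y, hy, ?_⟩
  rw [CayleyDRS.dist_eq hn hev, CayleyDRS.dist_eq hn hev,
    CayleyDRS.dist_eq hn hev, CayleyDRS.dist_eq hn hev]
  exact hne
end

section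
/- Let n ≥ 4 be an even integer and Λ = Cay(D_{2n}, Ψ) with Ψ = {b, ab, ..., a^{n-1}b} ∪ {a^{n/2}}. The minimum cardinality of a doubly resolving set of Λ equals n. -/
namespace CayleyDR
open DihedralGroup SimpleGraph

variable {n : ℕ}

/-- The half-turn rotation index. -/
def c (n : ℕ) : ZMod n := ((n / 2 : ℕ) : ZMod n)

lemma inv_r (i : ZMod n) : (r i)⁻¹ = r (-i) := rfl
lemma inv_sr (i : ZMod n) : (sr i)⁻¹ = sr i := rfl

section basic
variable (hn : 4 ≤ n) (hev : Even n)
include hn hev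

lemma c_add_c : c n + c n = 0 := by
  obtain ⟨k, hk⟩ := hev
  have h : n / 2 + n / 2 = n := by omega
  rw [c, ← Nat.cast_add, h, ZMod.natCast_self]

lemma c_ne_zero : c n ≠ 0 := by
  haveI : NeZero n := ⟨by omega⟩
  rw [c, Ne, ZMod.natCast_eq_zero_iff]
  intro h
  have := Nat.le_of_dvd (by omega) h
  omega

lemma neg_c : -c n = c n := by
  have := c_add_c hn hev
  linear_combination -this

lemma sr_mem_Psi (i : ZMod n) : sr i ∈ Psi n := Or.inl ⟨i, rfl⟩

lemma r_mem_Psi_iff (i : ZMod n) : r i ∈ Psi n ↔ i = c n := by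
  simp [Psi, c]

lemma adj_rr (i j : ZMod n) : (cayley (Psi n)).Adj (r i) (r j) ↔ j = i + c n := by
  rw [cayley, SimpleGraph.fromRel_adj]
  constructor
  · rintro ⟨hne, h | h⟩
    · rw [inv_r, r_mul_r, r_mem_Psi_iff hn hev] at h
      linear_combination h
    · rw [inv_r, r_mul_r, r_mem_Psi_iff hn hev] at h
      have := neg_c hn hev
      linear_combination -h + this
  · intro h
    subst h
    refine ⟨by simp [c_ne_zero hn hev], Or.inl ?_⟩
    rw [inv_r, r_mul_r, r_mem_Psi_iff hn hev]
    ring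

lemma adj_ss (i j : ZMod n) : (cayley (Psi n)).Adj (sr i) (sr j) ↔ j = i + c n := by
  rw [cayley, SimpleGraph.fromRel_adj]
  constructor
  · rintro ⟨hne, h | h⟩
    · rw [inv_sr, sr_mul_sr, r_mem_Psi_iff hn hev] at h
      linear_combination h
    · rw [inv_sr, sr_mul_sr, r_mem_Psi_iff hn hev] at h
      have := neg_c hn hev
      linear_combination -h + this
  · intro h
    subst h
    refine ⟨by simp [c_ne_zero hn hev], Or.inl ?_⟩
    rw [inv_sr, sr_mul_sr, r_mem_Psi_iff hn hev]
    ring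

lemma adj_rs (i j : ZMod n) : (cayley (Psi n)).Adj (r i) (sr j) := by
  rw [cayley, SimpleGraph.fromRel_adj]
  exact ⟨by simp, Or.inl (by rw [inv_r, r_mul_sr]; exact sr_mem_Psi hn hev _)⟩

lemma adj_sr' (i j : ZMod n) : (cayley (Psi n)).Adj (sr i) (r j) :=
  (adj_rs hn hev j i).symm

end basic

/-- The distance function of the Cayley graph, explicitly. -/
def D (n : ℕ) : DihedralGroup n → DihedralGroup n → ℕ
  | r i, r j => if i = j then 0 else if j = i + c n then 1 else 2
  | r _, sr _ => 1
  | sr _, r _ => 1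
  | sr i, sr j => if i = j then 0 else if j = i + c n then 1 else 2

section dist
variable (hn : 4 ≤ n) (hev : Even n)
include hn hev

lemma dist_eq_two_aux {x y w : DihedralGroup n} (hne : x ≠ y)
    (hnadj : ¬ (cayley (Psi n)).Adj x y)
    (h1 : (cayley (Psi n)).Adj x w) (h2 : (cayley (Psi n)).Adj w y) :
    (cayley (Psi n)).dist x y = 2 := by
  have hle : (cayley (Psi n)).dist x y ≤ 2 := by
    have := SimpleGraph.dist_le (SimpleGraph.Walk.cons h1 (SimpleGraph.Walk.cons h2 SimpleGraph.Walk.nil))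
    simpa using this
  have hre : (cayley (Psi n)).Reachable x y :=
    ⟨SimpleGraph.Walk.cons h1 (SimpleGraph.Walk.cons h2 SimpleGraph.Walk.nil)⟩
  have h0 : 0 < (cayley (Psi n)).dist x y := hre.pos_dist_of_ne hne
  have h1' : (cayley (Psi n)).dist x y ≠ 1 := fun h =>
    hnadj (SimpleGraph.dist_eq_one_iff_adj.mp h)
  omega

lemma dist_eq (x y : DihedralGroup n) : (cayley (Psi n)).dist x y = D n x y := by
  match x, y with
  | DihedralGroup.r i, DihedralGroup.r j =>
    by_cases hij : i = j
    · subst hij; simp [D]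
    · rw [D]
      by_cases hc : j = i + c n
      · rw [if_neg hij, if_pos hc]
        exact SimpleGraph.dist_eq_one_iff_adj.mpr ((adj_rr hn hev i j).mpr hc)
      · rw [if_neg hij, if_neg hc]
        exact dist_eq_two_aux hn hev (by simp [hij])
          (by rw [adj_rr hn hev]; exact hc)
          (adj_rs hn hev i 0) (adj_sr' hn hev 0 j)
  | DihedralGroup.r i, DihedralGroup.sr j =>
    exact SimpleGraph.dist_eq_one_iff_adj.mpr (adj_rs hn hev i j)
  | DihedralGroup.sr i, DihedralGroup.r j =>
    exact SimpleGraph.dist_eq_one_iff_adj.mpr (adj_sr' hn hev i j)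
  | DihedralGroup.sr i, DihedralGroup.sr j =>
    by_cases hij : i = j
    · subst hij; simp [D]
    · rw [D]
      by_cases hc : j = i + c n
      · rw [if_neg hij, if_pos hc]
        exact SimpleGraph.dist_eq_one_iff_adj.mpr ((adj_ss hn hev i j).mpr hc)
      · rw [if_neg hij, if_neg hc]
        exact dist_eq_two_aux hn hev (by simp [hij])
          (by rw [adj_ss hn hev]; exact hc)
          (adj_sr' hn hev i 0) (adj_rs hn hev 0 j)

end dist

/-! ### D-value lemmas -/

lemma D_rr_self (i : ZMod n) : D n (r i) (r i) = 0 := by simp [D]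

lemma D_rs (i j : ZMod n) : D n (r i) (sr j) = 1 := rfl
lemma D_sr (i j : ZMod n) : D n (sr i) (r j) = 1 := rfl

lemma D_ss_self (i : ZMod n) : D n (sr i) (sr i) = 0 := by simp [D]

section dvals
variable (hn : 4 ≤ n) (hev : Even n)
include hn hev

lemma D_rr_c (i : ZMod n) : D n (r i) (r (i + c n)) = 1 := by
  have hc0 := c_ne_zero hn hev
  rw [D, if_neg (fun h => hc0 (by linear_combination -h)), if_pos rfl]

lemma D_rr_other {i j : ZMod n} (h1 : i ≠ j) (h2 : j ≠ i + c n) :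
    D n (r i) (r j) = 2 := by
  rw [D, if_neg h1, if_neg h2]

lemma D_ss_c (i : ZMod n) : D n (sr i) (sr (i + c n)) = 1 := by
  have hc0 := c_ne_zero hn hev
  rw [D, if_neg (fun h => hc0 (by linear_combination -h)), if_pos rfl]

lemma D_ss_other {i j : ZMod n} (h1 : i ≠ j) (h2 : j ≠ i + c n) :
    D n (sr i) (sr j) = 2 := by
  rw [D, if_neg h1, if_neg h2]

end dvals

/-! ### The explicit doubly resolving set -/

/-- Enumeration of the candidate resolving set. -/
def f (n : ℕ) : Fin n → DihedralGroup n := fun k =>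
  if (k : ℕ) < n / 2 then r ((k : ℕ) : ZMod n)
  else sr ((((k : ℕ) - n / 2 : ℕ)) : ZMod n)

/-- The candidate doubly resolving set of size `n`. -/
def S (n : ℕ) : Set (DihedralGroup n) := Set.range (f n)

section upper
variable (hn : 4 ≤ n) (hev : Even n)
include hn hev

lemma f_injective : Function.Injective (f n) := by
  haveI : NeZero n := ⟨by omega⟩
  intro k k' h
  simp only [f] at h
  split_ifs at h with h1 h2 h2 <;>
    simp only [r.injEq, sr.injEq, reduceCtorEq] at h
  all_goals
    have hk : (k : ℕ) < n := k.2
    have hk' : (k' : ℕ) < n := k'.2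
    have := congrArg ZMod.val h
    rw [ZMod.val_cast_of_lt (by omega), ZMod.val_cast_of_lt (by omega)] at this
    exact Fin.ext (by omega)

lemma ncard_S : (S n).ncard = n := by
  rw [S, ← Set.image_univ, Set.ncard_image_of_injective _ (f_injective hn hev),
    Set.ncard_univ, Nat.card_eq_fintype_card, Fintype.card_fin]

lemma mem_S_r (i : ZMod n) : r i ∈ S n ↔ i.val < n / 2 := by
  haveI : NeZero n := ⟨by omega⟩
  constructor
  · rintro ⟨k, hk⟩
    rw [f] at hk
    by_cases h1 : (k : ℕ) < n / 2
    · rw [if_pos h1] at hk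
      rw [r.injEq] at hk
      rw [← hk, ZMod.val_cast_of_lt (by omega)]
      exact h1
    · rw [if_neg h1] at hk
      exact absurd hk (by simp)
  · intro h
    refine ⟨⟨i.val, ZMod.val_lt i⟩, ?_⟩
    rw [f]
    simp only [if_pos h]
    rw [ZMod.natCast_val, ZMod.cast_id]
  
lemma mem_S_sr (i : ZMod n) : sr i ∈ S n ↔ i.val < n / 2 := by
  haveI : NeZero n := ⟨by omega⟩
  obtain ⟨m, hm⟩ := hev
  constructor
  · rintro ⟨k, hk⟩
    rw [f] at hk
    by_cases h1 : (k : ℕ) < n / 2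
    · rw [if_pos h1] at hk
      exact absurd hk (by simp)
    · rw [if_neg h1] at hk
      rw [sr.injEq] at hk
      have hk2 : (k : ℕ) < n := k.2
      rw [← hk, ZMod.val_cast_of_lt (by omega)]
      omega
  · intro h
    have hlt : i.val + n / 2 < n := by have := ZMod.val_lt i; omega
    refine ⟨⟨i.val + n / 2, hlt⟩, ?_⟩
    rw [f]
    simp only [if_neg (by omega : ¬ (i.val + n / 2 < n / 2))]
    have : i.val + n / 2 - n / 2 = i.val := by omega
    rw [this, ZMod.natCast_val, ZMod.cast_id]

lemma val_add_c (i : ZMod n) :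
    (i + c n).val = if i.val < n / 2 then i.val + n / 2 else i.val - n / 2 := by
  haveI : NeZero n := ⟨by omega⟩
  obtain ⟨m, hm⟩ := hev
  have hc : (c n).val = n / 2 := by
    rw [c, ZMod.val_cast_of_lt (by omega)]
  have hv : i.val < n := ZMod.val_lt i
  rw [ZMod.val_add, hc]
  by_cases h : i.val < n / 2
  · rw [if_pos h, Nat.mod_eq_of_lt (by omega)]
  · rw [if_neg h, Nat.mod_eq_sub_mod (by omega), Nat.mod_eq_of_lt (by omega)]
    omega

lemma pair_r (i : ZMod n) : r i ∈ S n ∨ r (i + c n) ∈ S n := by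
  haveI : NeZero n := ⟨by omega⟩
  by_cases h : i.val < n / 2
  · exact Or.inl ((mem_S_r hn hev i).mpr h)
  · refine Or.inr ((mem_S_r hn hev _).mpr ?_)
    rw [val_add_c hn hev, if_neg h]
    have := ZMod.val_lt i
    obtain ⟨m, hm⟩ := hev
    omega

lemma pair_sr (i : ZMod n) : sr i ∈ S n ∨ sr (i + c n) ∈ S n := by
  haveI : NeZero n := ⟨by omega⟩
  by_cases h : i.val < n / 2
  · exact Or.inl ((mem_S_sr hn hev i).mpr h)
  · refine Or.inr ((mem_S_sr hn hev _).mpr ?_)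
    rw [val_add_c hn hev, if_neg h]
    have := ZMod.val_lt i
    obtain ⟨m, hm⟩ := hev
    omega

lemma r_zero_mem : r 0 ∈ S n := by
  haveI : NeZero n := ⟨by omega⟩
  rw [mem_S_r hn hev, ZMod.val_zero]
  omega

lemma sr_zero_mem : sr 0 ∈ S n := by
  haveI : NeZero n := ⟨by omega⟩
  rw [mem_S_sr hn hev, ZMod.val_zero]
  omega

lemma r_one_mem : r 1 ∈ S n := by
  haveI : NeZero n := ⟨by omega⟩
  haveI : Fact (1 < n) := ⟨by omega⟩
  rw [mem_S_r hn hev, ZMod.val_one]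
  omega

end upper

section resolve
variable (hn : 4 ≤ n) (hev : Even n)
include hn hev

lemma rot_pair (i j : ZMod n) (hij : i ≠ j) :
    ∃ x ∈ S n, ∃ y ∈ S n,
      (D n (r i) x : ℤ) - (D n (r i) y : ℤ) ≠ (D n (r j) x : ℤ) - (D n (r j) y : ℤ) := by
  rcases pair_r hn hev i with hx | hx
  · refine ⟨r i, hx, sr 0, sr_zero_mem hn hev, ?_⟩
    rw [D_rr_self, D_rs, D_rs]
    by_cases h : i = j + c n
    · rw [h, D_rr_c hn hev]; norm_num
    · rw [D_rr_other hn hev (Ne.symm hij) h]; norm_num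
  · refine ⟨r (i + c n), hx, sr 0, sr_zero_mem hn hev, ?_⟩
    rw [D_rr_c hn hev, D_rs, D_rs]
    by_cases h : j = i + c n
    · rw [← h, D_rr_self]; norm_num
    · rw [D_rr_other hn hev (i := j) (j := i + c n) h
        (fun hh => hij (add_right_cancel hh))]
      norm_num

lemma refl_pair (i j : ZMod n) (hij : i ≠ j) :
    ∃ x ∈ S n, ∃ y ∈ S n,
      (D n (sr i) x : ℤ) - (D n (sr i) y : ℤ) ≠ (D n (sr j) x : ℤ) - (D n (sr j) y : ℤ) := by
  rcases pair_sr hn hev i with hx | hx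
  · refine ⟨sr i, hx, r 0, r_zero_mem hn hev, ?_⟩
    rw [D_ss_self, D_sr, D_sr]
    by_cases h : i = j + c n
    · rw [h, D_ss_c hn hev]; norm_num
    · rw [D_ss_other hn hev (Ne.symm hij) h]; norm_num
  · refine ⟨sr (i + c n), hx, r 0, r_zero_mem hn hev, ?_⟩
    rw [D_ss_c hn hev, D_sr, D_sr]
    by_cases h : j = i + c n
    · rw [← h, D_ss_self]; norm_num
    · rw [D_ss_other hn hev (i := j) (j := i + c n) h
        (fun hh => hij (add_right_cancel hh))]
      norm_num

lemma mixed (i j : ZMod n) :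
    ∃ x ∈ S n, ∃ y ∈ S n,
      (D n (r i) x : ℤ) - (D n (r i) y : ℤ) ≠ (D n (sr j) x : ℤ) - (D n (sr j) y : ℤ) := by
  haveI : NeZero n := ⟨by omega⟩
  haveI : Fact (1 < n) := ⟨by omega⟩
  have hcc := c_add_c hn hev
  have hc0 := c_ne_zero hn hev
  by_cases hi : i.val < n / 2
  · have hxS : r i ∈ S n := (mem_S_r hn hev i).mpr hi
    rcases pair_sr hn hev j with hy | hy
    · refine ⟨r i, hxS, sr j, hy, ?_⟩
      rw [D_rr_self, D_rs, D_sr, D_ss_self]; norm_num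
    · refine ⟨r i, hxS, sr (j + c n), hy, ?_⟩
      rw [D_rr_self, D_rs, D_sr, D_ss_c hn hev]; norm_num
  · have hiv : i.val < n := ZMod.val_lt i
    have hicv : (i + c n).val = i.val - n / 2 := by rw [val_add_c hn hev, if_neg hi]
    have hxS : r (i + c n) ∈ S n := (mem_S_r hn hev _).mpr
      (by obtain ⟨m, hm⟩ := hev; omega)
    by_cases hj : j.val < n / 2
    · have hyS : sr j ∈ S n := (mem_S_sr hn hev j).mpr hj
      refine ⟨sr j, hyS, r (i + c n), hxS, ?_⟩
      rw [D_rs, D_sr, D_ss_self, D_rr_c hn hev]; norm_num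
    · have hjv : j.val < n := ZMod.val_lt j
      have hyS : sr (j + c n) ∈ S n := (mem_S_sr hn hev _).mpr
        (by rw [val_add_c hn hev, if_neg hj]; obtain ⟨m, hm⟩ := hev; omega)
      have hn2 : 2 ≤ n / 2 := by omega
      have hine0 : i ≠ 0 := by
        intro h
        rw [h, ZMod.val_zero] at hi
        omega
      by_cases h0 : i + c n = 0
      · have h1i : i ≠ (1 : ZMod n) := by
          intro h
          rw [h, ZMod.val_one] at hi
          omega
        have h1ic : (1 : ZMod n) ≠ i + c n := by rw [h0]; exact one_ne_zero
        refine ⟨sr (j + c n), hyS, r 1, r_one_mem hn hev, ?_⟩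
        rw [D_rs, D_ss_c hn hev, D_sr, D_rr_other hn hev (i := i) (j := 1) h1i h1ic]
        norm_num
      · refine ⟨sr (j + c n), hyS, r 0, r_zero_mem hn hev, ?_⟩
        rw [D_rs, D_ss_c hn hev, D_sr,
          D_rr_other hn hev (i := i) (j := 0) hine0 (fun h => h0 h.symm)]
        norm_num

lemma S_resolves : IsDoublyResolvingSet (cayley (Psi n)) (S n) := by
  intro u v huv
  simp only [dist_eq hn hev]
  rcases u with i | i <;> rcases v with j | j
  · exact rot_pair hn hev i j (fun h => huv (by rw [h]))
  · exact mixed hn hev i j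
  · obtain ⟨x, hx, y, hy, hne⟩ := mixed hn hev j i
    exact ⟨x, hx, y, hy, hne.symm⟩
  · exact refl_pair hn hev i j (fun h => huv (by rw [h]))

end resolve

section lower
variable (hn : 4 ≤ n) (hev : Even n)
include hn hev

lemma dist_invariant {x w : DihedralGroup n} (h1 : w ≠ x) (h2 : w ≠ x * r (c n)) :
    D n x w = D n (x * r (c n)) w := by
  have hcc := c_add_c hn hev
  rcases x with i | i <;> rcases w with k | k
  · rw [r_mul_r] at h2 ⊢
    have hki : i ≠ k := fun h => h1 (by rw [h])
    have hki2 : k ≠ i + c n := fun h => h2 (by rw [h])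
    rw [D_rr_other hn hev hki hki2,
      D_rr_other hn hev (Ne.symm hki2) (fun h => (Ne.symm hki) (by linear_combination h + hcc))]
  · rw [r_mul_r, D_rs, D_rs]
  · rw [sr_mul_r, D_sr, D_sr]
  · rw [sr_mul_r] at h2 ⊢
    have hki : i ≠ k := fun h => h1 (by rw [h])
    have hki2 : k ≠ i + c n := fun h => h2 (by rw [h])
    rw [D_ss_other hn hev hki hki2,
      D_ss_other hn hev (Ne.symm hki2) (fun h => (Ne.symm hki) (by linear_combination h + hcc))]

lemma mem_or_mem {T : Set (DihedralGroup n)}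
    (hT : IsDoublyResolvingSet (cayley (Psi n)) T) (x : DihedralGroup n) :
    x ∈ T ∨ x * r (c n) ∈ T := by
  by_contra hcon
  push_neg at hcon
  obtain ⟨hx1, hx2⟩ := hcon
  have hne : x ≠ x * r (c n) := by
    intro h
    have h1 : x * 1 = x * r (c n) := by rw [mul_one, ← h]
    have h2 : (1 : DihedralGroup n) = r (c n) := mul_left_cancel h1
    rw [one_def] at h2
    exact c_ne_zero hn hev (r.inj h2).symm
  obtain ⟨x', hx', y', hy', hne'⟩ := hT x (x * r (c n)) hne
  refine hne' ?_
  have hxx'1 : x' ≠ x := ne_of_mem_of_not_mem hx' hx1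
  have hxx'2 : x' ≠ x * r (c n) := ne_of_mem_of_not_mem hx' hx2
  have hyy'1 : y' ≠ x := ne_of_mem_of_not_mem hy' hx1
  have hyy'2 : y' ≠ x * r (c n) := ne_of_mem_of_not_mem hy' hx2
  rw [dist_eq hn hev, dist_eq hn hev, dist_eq hn hev, dist_eq hn hev,
    dist_invariant hn hev hxx'1 hxx'2, dist_invariant hn hev hyy'1 hyy'2]

lemma lower_bound {T : Set (DihedralGroup n)}
    (hT : IsDoublyResolvingSet (cayley (Psi n)) T) : n ≤ T.ncard := by
  haveI : NeZero n := ⟨by omega⟩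
  let e : DihedralGroup n ≃ DihedralGroup n := Equiv.mulRight (r (c n))
  have hcov : (Set.univ : Set (DihedralGroup n)) ⊆ T ∪ e ⁻¹' T := by
    intro x _
    rcases mem_or_mem hn hev hT x with h | h
    · exact Or.inl h
    · exact Or.inr (by simpa [e] using h)
  have hpre : (e ⁻¹' T).ncard = T.ncard := by
    rw [← Equiv.image_symm_eq_preimage e T,
      Set.ncard_image_of_injective _ e.symm.injective]
  have h2n : 2 * n ≤ 2 * T.ncard := by
    calc 2 * n = (Set.univ : Set (DihedralGroup n)).ncard := by
          rw [Set.ncard_univ, Nat.card_eq_fintype_card, DihedralGroup.card]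
      _ ≤ (T ∪ e ⁻¹' T).ncard := Set.ncard_le_ncard hcov (Set.toFinite _)
      _ ≤ T.ncard + (e ⁻¹' T).ncard := Set.ncard_union_le _ _
      _ = 2 * T.ncard := by rw [hpre]; ring
  omega

end lower

end CayleyDR

theorem cayley_min_doubly_resolving (n : ℕ) (hn : 4 ≤ n) (hev : Even n) :
    IsLeast {m : ℕ | ∃ S : Set (DihedralGroup n),
      S.ncard = m ∧ IsDoublyResolvingSet (cayley (Psi n)) S} n := by
  constructor
  · exact ⟨CayleyDR.S n, CayleyDR.ncard_S hn hev, CayleyDR.S_resolves hn hev⟩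
  · rintro m ⟨T, hcard, hDR⟩
    rw [← hcard]
    exact CayleyDR.lower_bound hn hev hDR
end

section
/- Let n ≥ 4 be an even integer and Λ = Cay(D_{2n}, Ψ) with Ψ = {b, ab, ..., a^{n-1}b} ∪ {a^{n/2}}. The set N = {1, a^{n/2}, b, a^{n/2}b} induces a clique of size 4 in Λ, and 4 is the clique number of Λ. -/
open DihedralGroup

lemma inv_r {n : ℕ} (i : ZMod n) : (r i)⁻¹ = r (-i) := rfl
lemma inv_sr {n : ℕ} (i : ZMod n) : (sr i)⁻¹ = sr i := rfl

lemma r_mem_Psi {n : ℕ} (i : ZMod n) : r i ∈ Psi n ↔ i = ((n / 2 : ℕ) : ZMod n) := by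
  simp [Psi]

lemma sr_mem_Psi {n : ℕ} (i : ZMod n) : sr i ∈ Psi n := Or.inl ⟨i, rfl⟩

theorem cayley_clique_number (n : ℕ) (hn : 4 ≤ n) (hev : Even n) :
    (cayley (Psi n)).IsNClique 4
      ({1, DihedralGroup.r ((n / 2 : ℕ) : ZMod n), DihedralGroup.sr 0,
        DihedralGroup.r ((n / 2 : ℕ) : ZMod n) * DihedralGroup.sr 0} : Finset (DihedralGroup n)) ∧
    (∀ t : Finset (DihedralGroup n), (cayley (Psi n)).IsClique ↑t → t.card ≤ 4) := by
  set c : ZMod n := ((n / 2 : ℕ) : ZMod n) with hc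
  have hnpos : 0 < n := by omega
  obtain ⟨m, hm⟩ := hev
  haveI : NeZero n := ⟨by omega⟩
  have hc0 : c ≠ 0 := by
    rw [hc, Ne, ZMod.natCast_eq_zero_iff]
    intro h
    have h2 : 0 < n / 2 := by omega
    have h3 := Nat.le_of_dvd h2 h
    omega
  have hcc : c + c = 0 := by
    rw [hc, ← Nat.cast_add]
    have : n / 2 + n / 2 = n := by omega
    rw [this, ZMod.natCast_self]
  have hneg : -c = c := by linear_combination -hcc
  -- adjacency characterizations
  have adj_rr : ∀ i j : ZMod n, (cayley (Psi n)).Adj (r i) (r j) → j - i = c := by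
    intro i j h
    obtain ⟨hne, h | h⟩ := h
    · rw [_root_.inv_r, r_mul_r, r_mem_Psi] at h
      first | linear_combination h | linear_combination -h - hcc
    · rw [_root_.inv_r, r_mul_r, r_mem_Psi] at h
      first | linear_combination h | linear_combination -h - hcc
  have adj_ss : ∀ i j : ZMod n, (cayley (Psi n)).Adj (sr i) (sr j) → j - i = c := by
    intro i j h
    obtain ⟨hne, h | h⟩ := h
    · rw [_root_.inv_sr, sr_mul_sr, r_mem_Psi] at h
      first | linear_combination h | linear_combination -h - hcc
    · rw [_root_.inv_sr, sr_mul_sr, r_mem_Psi] at h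
      first | linear_combination h | linear_combination -h - hcc
  constructor
  · constructor
    · intro x hx y hy hxy
      simp only [Finset.coe_insert, Set.mem_insert_iff, Finset.coe_singleton,
        Set.mem_singleton_iff] at hx hy
      refine ⟨hxy, ?_⟩
      have key : ∀ z ∈ ({1, r c, sr 0, r c * sr 0} : Set (DihedralGroup n)),
          ∀ w ∈ ({1, r c, sr 0, r c * sr 0} : Set (DihedralGroup n)), z ≠ w →
          z⁻¹ * w ∈ Psi n ∨ w⁻¹ * z ∈ Psi n := by
        rintro z (rfl | rfl | rfl | rfl) w (rfl | rfl | rfl | rfl) hne <;>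
          simp only [one_def, r_mul_sr, _root_.inv_r, _root_.inv_sr, r_mul_r, sr_mul_sr, sr_mul_r, mul_assoc] <;>
          first
          | exact absurd rfl hne
          | (left; first
              | exact sr_mem_Psi _
              | (rw [r_mem_Psi]; ring_nf; (try rw [hneg]); try exact hc))
          | (right; first
              | exact sr_mem_Psi _
              | (rw [r_mem_Psi]; ring_nf; (try rw [hneg]); try exact hc))
      exact key x (by tauto) y (by tauto) hxy
    · have h1 : (1 : DihedralGroup n) ≠ r c := by
        rw [one_def]
        simp only [ne_eq, r.injEq]
        exact fun h => hc0 h.symm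
      have h2 : (1 : DihedralGroup n) ≠ sr 0 := by
        rw [one_def]; exact fun h => by cases h
      have h3 : (1 : DihedralGroup n) ≠ r c * sr 0 := by
        rw [one_def, r_mul_sr]; exact fun h => by cases h
      have h4 : r c ≠ sr 0 := fun h => by cases h
      have h5 : r c ≠ r c * sr 0 := by
        rw [r_mul_sr]; exact fun h => by cases h
      have h6 : sr 0 ≠ r c * sr 0 := by
        rw [r_mul_sr]
        simp only [ne_eq, sr.injEq]
        intro h
        apply hc0
        linear_combination h
      have m1 : (1 : DihedralGroup n) ∉
          ({r c, sr 0, r c * sr 0} : Finset (DihedralGroup n)) := by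
        simp only [Finset.mem_insert, Finset.mem_singleton]
        push_neg
        exact ⟨h1, h2, h3⟩
      have m2 : r c ∉ ({sr 0, r c * sr 0} : Finset (DihedralGroup n)) := by
        simp only [Finset.mem_insert, Finset.mem_singleton]
        push_neg
        exact ⟨h4, h5⟩
      have m3 : sr (0 : ZMod n) ∉ ({r c * sr 0} : Finset (DihedralGroup n)) := by
        simp only [Finset.mem_singleton]
        exact h6
      rw [Finset.card_insert_of_notMem m1, Finset.card_insert_of_notMem m2,
        Finset.card_insert_of_notMem m3, Finset.card_singleton]
  · intro t ht
    classical
    have hsub : t ⊆ t.filter (fun x => ∃ i, x = r i) ∪ t.filter (fun x => ∃ i, x = sr i) := by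
      intro x hx
      rcases x with i | i
      · exact Finset.mem_union_left _ (Finset.mem_filter.2 ⟨hx, i, rfl⟩)
      · exact Finset.mem_union_right _ (Finset.mem_filter.2 ⟨hx, i, rfl⟩)
    have hA : (t.filter (fun x => ∃ i, x = r i)).card ≤ 2 := by
      by_contra h
      obtain ⟨x, hx, y, hy, z, hz, hxy, hxz, hyz⟩ :=
        Finset.two_lt_card.1 (lt_of_not_ge h)
      obtain ⟨hx, i, rfl⟩ := Finset.mem_filter.1 hx
      obtain ⟨hy, j, rfl⟩ := Finset.mem_filter.1 hy
      obtain ⟨hz, k, rfl⟩ := Finset.mem_filter.1 hz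
      have e1 := adj_rr i j (ht hx hy hxy)
      have e2 := adj_rr i k (ht hx hz hxz)
      have e3 := adj_rr j k (ht hy hz hyz)
      exact hc0 (by linear_combination e2 - e1 - e3)
    have hB : (t.filter (fun x => ∃ i, x = sr i)).card ≤ 2 := by
      by_contra h
      obtain ⟨x, hx, y, hy, z, hz, hxy, hxz, hyz⟩ :=
        Finset.two_lt_card.1 (lt_of_not_ge h)
      obtain ⟨hx, i, rfl⟩ := Finset.mem_filter.1 hx
      obtain ⟨hy, j, rfl⟩ := Finset.mem_filter.1 hy
      obtain ⟨hz, k, rfl⟩ := Finset.mem_filter.1 hz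
      have e1 := adj_ss i j (ht hx hy hxy)
      have e2 := adj_ss i k (ht hx hz hxz)
      have e3 := adj_ss j k (ht hy hz hyz)
      exact hc0 (by linear_combination e2 - e1 - e3)
    have k1 := Finset.card_le_card hsub
    have k2 := Finset.card_union_le (t.filter (fun x => ∃ i, x = r i))
      (t.filter (fun x => ∃ i, x = sr i))
    omega
end
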